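/- arXiv:0907.2545 — 3 statements merged into one kernel-verified Lean document; each statement's English description precedes it below -/
import Mathlib

section
/- Let S be the set of T-even matrix polynomials in P_m(ℂ^{n×n}) and let P ∈ S be regular. Let λ ∈ ℂ and x ∈ ℂⁿ with x^H x = 1, and set r := −P(λ)x, Λ_m := (1, λ, …, λ^m)ᵀ, and P_x := I − x x^H. Then for the spectral norm, η_2^S(λ, x, P) = sqrt( |xᵀr|²/‖Π_e(Λ_m)‖₂² + (‖r‖₂² − |xᵀr|²)/‖Λ_m‖₂² ). Moreover, if |xᵀr| < ‖r‖₂, then defining E_j := (conj(λ^j)/‖Π_e(Λ_m)‖₂²)·(xᵀr)·x̄ x^H + (conj(λ^j)/‖Λ_m‖₂²)·(x̄ rᵀ P_x + P_xᵀ r x^H) for even j, E_j := (conj(λ^j)/‖Λ_m‖₂²)·(P_xᵀ r x^H − x̄ rᵀ P_x) for odd j, and ΔA_j := E_j − conj(λ^j)·conj(xᵀr)·P_xᵀ r rᵀ P_x / (‖Π_e(Λ_m)‖₂²·(‖r‖₂² − |xᵀr|²)) for even j and ΔA_j := E_j for odd j, the polynomial ΔP(z) := Σ_{j=0}^m z^j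 ΔA_j is T-even, satisfies P(λ)x + ΔP(λ)x = 0, and |||ΔP|||₂ = η_2^S(λ, x, P). -/
open scoped ComplexConjugate
open Matrix

noncomputable section

variable {ι : Type*} [Fintype ι] [DecidableEq ι]

/-- Evaluation of the matrix polynomial with coefficient list `A` at the point `z`. -/
def polyEval {m : ℕ} (A : Fin (m+1) → Matrix ι ι ℂ) (z : ℂ) : Matrix ι ι ℂ :=
  ∑ j : Fin (m+1), z ^ (j : ℕ) • A j

/-- Squared Euclidean norm of a complex vector. -/
def vecNormSq (x : ι → ℂ) : ℝ := ∑ i, ‖x i‖ ^ 2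

/-- Euclidean norm of a complex vector. -/
def vecNorm (x : ι → ℂ) : ℝ := Real.sqrt (vecNormSq x)

/-- `‖(1, z, …, z^m)‖₂²`. -/
def lamNormSq (m : ℕ) (z : ℂ) : ℝ := ∑ j : Fin (m+1), ‖z ^ (j : ℕ)‖ ^ 2

/-- Squared Frobenius norm of a matrix. -/
def frobNormSq (M : Matrix ι ι ℂ) : ℝ := ∑ i, ∑ k, ‖M i k‖ ^ 2

/-- Spectral (operator 2-) norm of a matrix. -/
def specNorm (M : Matrix ι ι ℂ) : ℝ := ‖Matrix.toEuclideanCLM (𝕜 := ℂ) M‖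

/-- Frobenius norm of a matrix polynomial: `(Σ_j ‖A_j‖_F²)^{1/2}`. -/
def polyNormF {m : ℕ} (A : Fin (m+1) → Matrix ι ι ℂ) : ℝ :=
  Real.sqrt (∑ j, frobNormSq (A j))

/-- Spectral norm of a matrix polynomial: `(Σ_j ‖A_j‖₂²)^{1/2}`. -/
def polyNorm2 {m : ℕ} (A : Fin (m+1) → Matrix ι ι ℂ) : ℝ :=
  Real.sqrt (∑ j, specNorm (A j) ^ 2)

/-- Structured backward error of `(lam, x)` as an approximate eigenpair of the matrix
polynomial `A`, with respect to the polynomial norm `N` and the structure class `S`. -/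
def eta {m : ℕ} (N : (Fin (m+1) → Matrix ι ι ℂ) → ℝ)
    (S : Set (Fin (m+1) → Matrix ι ι ℂ)) (lam : ℂ) (x : ι → ℂ)
    (A : Fin (m+1) → Matrix ι ι ℂ) : ℝ :=
  sInf {t | ∃ ΔA ∈ S, (polyEval A lam + polyEval ΔA lam) *ᵥ x = 0 ∧ t = N ΔA}

/-- A matrix polynomial is regular if `det P(z) ≠ 0` for some `z`. -/
def Regular {m : ℕ} (A : Fin (m+1) → Matrix ι ι ℂ) : Prop :=
  ∃ z : ℂ, (polyEval A z).det ≠ 0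


/-- The class of T-even matrix polynomials: symmetric coefficients at even indices,
skew-symmetric coefficients at odd indices. -/
def TevenPoly {ι : Type*} [Fintype ι] [DecidableEq ι] {m : ℕ} :
    Set (Fin (m+1) → Matrix ι ι ℂ) :=
  {B | ∀ j : Fin (m+1), (Even (j : ℕ) → (B j)ᵀ = B j) ∧ (¬ Even (j : ℕ) → (B j)ᵀ = -(B j))}

/-- `‖Π_e(Λ_m)‖₂²`, the squared norm of the even-index part of `(1, z, …, z^m)`. -/
def lamEvenNormSq (m : ℕ) (z : ℂ) : ℝ :=
  ∑ j : Fin (m+1), if Even (j : ℕ) then ‖z ^ (j : ℕ)‖ ^ 2 else 0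

section Helpers
set_option linter.unusedSectionVars false

variable {ι : Type*} [Fintype ι] [DecidableEq ι]

lemma vecNormSq_nonneg (a : ι → ℂ) : 0 ≤ vecNormSq a :=
  Finset.sum_nonneg fun _ _ => sq_nonneg _

lemma vecNorm_sq (a : ι → ℂ) : vecNorm a ^ 2 = vecNormSq a :=
  Real.sq_sqrt (vecNormSq_nonneg a)

lemma vecNorm_nonneg (a : ι → ℂ) : 0 ≤ vecNorm a := Real.sqrt_nonneg _

lemma star_dotProduct_self (a : ι → ℂ) : star a ⬝ᵥ a = ((vecNormSq a : ℝ) : ℂ) := by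
  simp only [dotProduct, vecNormSq, Complex.ofReal_sum, Pi.star_apply, Complex.star_def]
  refine Finset.sum_congr rfl fun i _ => ?_
  rw [RCLike.conj_mul]
  norm_cast

lemma star_dotProduct_comm (a b : ι → ℂ) :
    star b ⬝ᵥ a = conj (star a ⬝ᵥ b) := by
  simp only [dotProduct, map_sum, Pi.star_apply, Complex.star_def, _root_.map_mul,
    Complex.conj_conj]
  exact Finset.sum_congr rfl fun i _ => mul_comm _ _

lemma vecNormSq_star (a : ι → ℂ) : vecNormSq (star a) = vecNormSq a := by
  simp [vecNormSq, Pi.star_apply]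

lemma vecNormSq_smul (c : ℂ) (a : ι → ℂ) :
    vecNormSq (c • a) = ‖c‖ ^ 2 * vecNormSq a := by
  simp [vecNormSq, norm_smul, mul_pow, Finset.mul_sum]

lemma vecNormSq_smul_add (p q : ℂ) (a b : ι → ℂ) (hab : star a ⬝ᵥ b = 0) :
    vecNormSq (p • a + q • b) = ‖p‖ ^ 2 * vecNormSq a + ‖q‖ ^ 2 * vecNormSq b := by
  have hba : star b ⬝ᵥ a = 0 := by rw [star_dotProduct_comm, hab, map_zero]
  have key : ((vecNormSq (p • a + q • b) : ℝ) : ℂ)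
      = ((‖p‖ ^ 2 * vecNormSq a + ‖q‖ ^ 2 * vecNormSq b : ℝ) : ℂ) := by
    rw [← star_dotProduct_self]
    have hstar : star (p • a + q • b) = conj p • star a + conj q • star b := by
      simp [star_smul, star_add, Complex.star_def]
    rw [hstar]
    simp only [add_dotProduct, dotProduct_add, smul_dotProduct,
      dotProduct_smul, hab, hba, star_dotProduct_self, smul_eq_mul]
    have hp : p * (starRingEnd ℂ) p = ((‖p‖ : ℂ)) ^ 2 := RCLike.mul_conj p
    have hq : q * (starRingEnd ℂ) q = ((‖q‖ : ℂ)) ^ 2 := RCLike.mul_conj q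
    push_cast
    linear_combination ((vecNormSq a : ℝ) : ℂ) * hp + ((vecNormSq b : ℝ) : ℂ) * hq
  exact_mod_cast key

lemma vecMulVec_mulVec (p q y : ι → ℂ) :
    Matrix.vecMulVec p q *ᵥ y = (q ⬝ᵥ y) • p := by
  ext i
  simp [Matrix.mulVec, Matrix.vecMulVec_apply, dotProduct, Finset.mul_sum,
    mul_comm, mul_assoc, mul_left_comm]

lemma transpose_vecMulVec (p q : ι → ℂ) :
    (Matrix.vecMulVec p q)ᵀ = Matrix.vecMulVec q p := by
  ext i k
  simp [Matrix.vecMulVec_apply, mul_comm]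

lemma mul_vecMulVec (M : Matrix ι ι ℂ) (p q : ι → ℂ) :
    M * Matrix.vecMulVec p q = Matrix.vecMulVec (M *ᵥ p) q := by
  ext i k
  simp [Matrix.mul_apply, Matrix.vecMulVec_apply, Matrix.mulVec, dotProduct,
    Finset.sum_mul, mul_assoc]

lemma vecMulVec_mul (p q : ι → ℂ) (M : Matrix ι ι ℂ) :
    Matrix.vecMulVec p q * M = Matrix.vecMulVec p (Mᵀ *ᵥ q) := by
  ext i k
  simp only [Matrix.mul_apply, Matrix.vecMulVec_apply, Matrix.mulVec, dotProduct,
    Matrix.transpose_apply, Finset.mul_sum]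
  exact Finset.sum_congr rfl fun j _ => by ring

lemma polyEval_mulVec {m : ℕ} (A : Fin (m+1) → Matrix ι ι ℂ) (z : ℂ) (y : ι → ℂ) :
    polyEval A z *ᵥ y = ∑ j : Fin (m+1), z ^ (j : ℕ) • (A j *ᵥ y) := by
  ext i
  simp only [polyEval, Matrix.mulVec, dotProduct, Finset.sum_apply,
    Matrix.sum_apply, Matrix.smul_apply, Pi.smul_apply, smul_eq_mul, Finset.sum_mul,
    Finset.mul_sum]
  rw [Finset.sum_comm]
  exact Finset.sum_congr rfl fun j _ => Finset.sum_congr rfl fun k _ => by ring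

/-- Transfer to Euclidean space. -/
def eE (y : ι → ℂ) : EuclideanSpace ℂ ι := (WithLp.equiv 2 (ι → ℂ)).symm y

lemma eE_apply (y : ι → ℂ) (i : ι) : eE y i = y i := rfl

lemma norm_eE (y : ι → ℂ) : ‖eE y‖ = vecNorm y := by
  rw [EuclideanSpace.norm_eq, vecNorm, vecNormSq]
  rfl

lemma norm_eE_sq (y : ι → ℂ) : ‖eE y‖ ^ 2 = vecNormSq y := by
  rw [norm_eE, vecNorm_sq]

lemma inner_eE (u v : ι → ℂ) : (inner ℂ (eE u) (eE v) : ℂ) = star u ⬝ᵥ v := by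
  simp only [PiLp.inner_apply, RCLike.inner_apply', dotProduct, eE_apply,
    Pi.star_apply, Complex.star_def]

lemma eE_add (u v : ι → ℂ) : eE (u + v) = eE u + eE v := rfl

lemma eE_smul (c : ℂ) (u : ι → ℂ) : eE (c • u) = c • eE u := rfl

lemma eE_sum {κ : Type*} (s : Finset κ) (f : κ → ι → ℂ) :
    eE (∑ j ∈ s, f j) = ∑ j ∈ s, eE (f j) := by
  classical
  induction s using Finset.induction_on with
  | empty => rfl
  | insert _ _ h ih => rw [Finset.sum_insert h, Finset.sum_insert h, eE_add, ih]

lemma toEuclideanCLM_eE (M : Matrix ι ι ℂ) (y : ι → ℂ) :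
    Matrix.toEuclideanCLM (𝕜 := ℂ) M (eE y) = eE (M *ᵥ y) := by
  exact Matrix.toEuclideanCLM_toLp M y

lemma specNorm_nonneg (M : Matrix ι ι ℂ) : 0 ≤ specNorm M := norm_nonneg _

lemma vecNorm_mulVec_le (M : Matrix ι ι ℂ) (y : ι → ℂ) :
    vecNorm (M *ᵥ y) ≤ specNorm M * vecNorm y := by
  rw [← norm_eE, ← norm_eE, ← toEuclideanCLM_eE]
  exact ContinuousLinearMap.le_opNorm _ _

lemma vecNormSq_mulVec_le (M : Matrix ι ι ℂ) (y : ι → ℂ) :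
    vecNormSq (M *ᵥ y) ≤ specNorm M ^ 2 * vecNormSq y := by
  rw [← vecNorm_sq, ← vecNorm_sq, ← mul_pow]
  exact pow_le_pow_left₀ (vecNorm_nonneg _) (vecNorm_mulVec_le M y) 2

lemma specNorm_le {M : Matrix ι ι ℂ} {c : ℝ} (hc : 0 ≤ c)
    (h : ∀ y : ι → ℂ, vecNormSq (M *ᵥ y) ≤ c ^ 2 * vecNormSq y) :
    specNorm M ≤ c := by
  refine ContinuousLinearMap.opNorm_le_bound _ hc fun z => ?_
  have hz : z = eE (WithLp.equiv 2 (ι → ℂ) z) := rfl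
  rw [hz, toEuclideanCLM_eE, norm_eE, norm_eE]
  set y := WithLp.equiv 2 (ι → ℂ) z
  have h1 : vecNorm (M *ᵥ y) ^ 2 ≤ (c * vecNorm y) ^ 2 := by
    rw [vecNorm_sq, mul_pow, vecNorm_sq]; exact h y
  have h2 : 0 ≤ c * vecNorm y := mul_nonneg hc (vecNorm_nonneg _)
  nlinarith [vecNorm_nonneg (M *ᵥ y)]

lemma specNorm_sq_eq {M : Matrix ι ι ℂ} {C : ℝ} (x0 : ι → ℂ)
    (hC : 0 ≤ C) (hx0 : vecNormSq x0 = 1)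
    (hub : ∀ y : ι → ℂ, vecNormSq (M *ᵥ y) ≤ C * vecNormSq y)
    (hwit : vecNormSq (M *ᵥ x0) = C) :
    specNorm M ^ 2 = C := by
  have hle : specNorm M ≤ Real.sqrt C := by
    refine specNorm_le (Real.sqrt_nonneg _) fun y => ?_
    rw [Real.sq_sqrt hC]; exact hub y
  have h1 : specNorm M ^ 2 ≤ C := by
    have := pow_le_pow_left₀ (specNorm_nonneg M) hle 2
    rwa [Real.sq_sqrt hC] at this
  have h2 : C ≤ specNorm M ^ 2 := by
    have := vecNormSq_mulVec_le M x0
    rwa [hwit, hx0, mul_one] at this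
  linarith

lemma cauchy_one (a y : ι → ℂ) : ‖star a ⬝ᵥ y‖ ^ 2 ≤ vecNormSq a * vecNormSq y := by
  rw [← inner_eE, ← norm_eE_sq, ← norm_eE_sq, ← mul_pow]
  exact pow_le_pow_left₀ (norm_nonneg _) (norm_inner_le_norm _ _) 2

lemma bessel_two (a b y : ι → ℂ) (ha : vecNormSq a = 1) (hb : vecNormSq b ≠ 0)
    (hab : star a ⬝ᵥ b = 0) :
    ‖star a ⬝ᵥ y‖ ^ 2 + ‖star b ⬝ᵥ y‖ ^ 2 / vecNormSq b ≤ vecNormSq y := by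
  have hbpos : 0 < vecNormSq b := lt_of_le_of_ne (vecNormSq_nonneg b) (Ne.symm hb)
  set t : ℝ := vecNorm b with ht
  have ht2 : t ^ 2 = vecNormSq b := vecNorm_sq b
  have htpos : 0 < t := by
    rw [ht, vecNorm]; exact Real.sqrt_pos.2 hbpos
  set v : Bool → EuclideanSpace ℂ ι := fun i => if i then ((t : ℂ))⁻¹ • eE b else eE a with hv
  have hba : star b ⬝ᵥ a = 0 := by rw [star_dotProduct_comm, hab, map_zero]
  have htne : (t : ℂ) ≠ 0 := by exact_mod_cast htpos.ne'
  have e1 : v false = eE a := rfl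
  have e2 : v true = ((t : ℂ))⁻¹ • eE b := rfl
  have horth : Orthonormal ℂ v := by
    rw [orthonormal_iff_ite]
    intro i j
    cases i <;> cases j
    · rw [e1, inner_eE, star_dotProduct_self, ha]; simp
    · rw [e1, e2, inner_smul_right, inner_eE, hab, mul_zero]; simp
    · rw [e2, e1, inner_smul_left, inner_eE, hba, mul_zero]; simp
    · rw [e2, inner_smul_left, inner_smul_right, inner_eE, star_dotProduct_self,
        map_inv₀, Complex.conj_ofReal, ← ht2, if_pos rfl]
      push_cast
      field_simp
  have hbes := horth.sum_inner_products_le (s := Finset.univ) (eE y)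
  rw [Fintype.sum_bool] at hbes
  have h1 : ‖(inner ℂ (v false) (eE y) : ℂ)‖ ^ 2 = ‖star a ⬝ᵥ y‖ ^ 2 := by
    rw [e1, inner_eE]
  have h2 : ‖(inner ℂ (v true) (eE y) : ℂ)‖ ^ 2 = ‖star b ⬝ᵥ y‖ ^ 2 / vecNormSq b := by
    rw [e2, inner_smul_left, inner_eE, map_inv₀, Complex.conj_ofReal, norm_mul, mul_pow,
      norm_inv, Complex.norm_real, Real.norm_eq_abs, abs_of_pos htpos, ← ht2]
    field_simp
  rw [h1, h2, norm_eE_sq] at hbes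
  linarith

lemma key_alg (a b d u v : ℂ) (t : ℝ)
    (h : a * conj b = ((t : ℂ)) ^ 2 * (b * conj d)) :
    ‖a * u + b * v‖ ^ 2 + t ^ 2 * ‖b * u - d * v‖ ^ 2
      = (‖a‖ ^ 2 + t ^ 2 * ‖b‖ ^ 2) * ‖u‖ ^ 2 + (‖b‖ ^ 2 + t ^ 2 * ‖d‖ ^ 2) * ‖v‖ ^ 2 := by
  have h2 : conj a * b = ((t : ℂ)) ^ 2 * (conj b * d) := by
    have := congrArg (starRingEnd ℂ) h
    simpa [_root_.map_mul, Complex.conj_conj, Complex.conj_ofReal, map_pow, mul_comm] using this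
  have H : (a * u + b * v) * conj (a * u + b * v)
        + ((t : ℂ)) ^ 2 * ((b * u - d * v) * conj (b * u - d * v))
      = (a * conj a + ((t : ℂ)) ^ 2 * (b * conj b)) * (u * conj u)
        + (b * conj b + ((t : ℂ)) ^ 2 * (d * conj d)) * (v * conj v) := by
    simp only [map_add, _root_.map_mul, map_sub]
    linear_combination (u * conj v) * h + (conj u * v) * h2
  simp only [Complex.mul_conj] at H
  have hn : ∀ z : ℂ, ‖z‖ ^ 2 = Complex.normSq z := fun z => by
    rw [Complex.sq_norm]
  simp only [hn]
  refine Complex.ofReal_injective ?_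
  push_cast
  push_cast at H
  linear_combination H

end Helpers

set_option maxHeartbeats 2000000

/-- Structured backward error of an approximate eigenpair of a T-even
matrix polynomial, spectral norm: explicit formula and (when `|xᵀr| < ‖r‖₂`) the explicitly
given minimal T-even perturbation. -/
theorem Teven_backward_error_spectral {n m : ℕ}
    (A : Fin (m+1) → Matrix (Fin n) (Fin n) ℂ)
    (hA : A ∈ TevenPoly) (hreg : Regular A)
    (lam : ℂ) (x : Fin n → ℂ) (hx : star x ⬝ᵥ x = 1)
    (r : Fin n → ℂ) (hr : r = -(polyEval A lam *ᵥ x))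
    (Px : Matrix (Fin n) (Fin n) ℂ) (hPx : Px = 1 - vecMulVec x (star x))
    (ΔA : Fin (m+1) → Matrix (Fin n) (Fin n) ℂ)
    (hΔ : ∀ j : Fin (m+1),
      ΔA j = if Even (j : ℕ) then
          ((conj (lam ^ (j : ℕ)) * (x ⬝ᵥ r)) / (lamEvenNormSq m lam : ℂ)) •
              vecMulVec (star x) (star x)
            + (conj (lam ^ (j : ℕ)) / (lamNormSq m lam : ℂ)) •
              (vecMulVec (star x) r * Px + Pxᵀ * vecMulVec r (star x))
            - (conj (lam ^ (j : ℕ)) * conj (x ⬝ᵥ r) /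
                ((lamEvenNormSq m lam : ℂ) * ((vecNormSq r - ‖x ⬝ᵥ r‖ ^ 2 : ℝ) : ℂ))) •
              (Pxᵀ * vecMulVec r r * Px)
        else
          (conj (lam ^ (j : ℕ)) / (lamNormSq m lam : ℂ)) •
            (Pxᵀ * vecMulVec r (star x) - vecMulVec (star x) r * Px)) :
    eta polyNorm2 TevenPoly lam x A
      = Real.sqrt (‖x ⬝ᵥ r‖ ^ 2 / lamEvenNormSq m lam
          + (vecNormSq r - ‖x ⬝ᵥ r‖ ^ 2) / lamNormSq m lam) ∧
    (‖x ⬝ᵥ r‖ < vecNorm r →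
      ΔA ∈ TevenPoly ∧
      (polyEval A lam + polyEval ΔA lam) *ᵥ x = 0 ∧
      polyNorm2 ΔA = eta polyNorm2 TevenPoly lam x A) := by
  classical
  -- abbreviations
  set s : ℂ := x ⬝ᵥ r with hs_def
  set Me : ℝ := lamEvenNormSq m lam with hMe_def
  set Mf : ℝ := lamNormSq m lam with hMf_def
  set w : Fin n → ℂ := r - s • star x with hw_def
  set τ2 : ℝ := vecNormSq w with hτ2_def
  clear_value s Me Mf w τ2
  -- positivity of the lambda norms
  have hMe1 : (1:ℝ) ≤ Me := by
    rw [hMe_def, lamEvenNormSq]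
    have h0 := Finset.single_le_sum
      (f := fun j : Fin (m+1) => if Even ((j:ℕ)) then ‖lam ^ (j:ℕ)‖^2 else 0)
      (fun i _ => by split <;> positivity) (Finset.mem_univ (0 : Fin (m+1)))
    simpa using h0
  have hMf1 : (1:ℝ) ≤ Mf := by
    rw [hMf_def, lamNormSq]
    have h0 := Finset.single_le_sum
      (f := fun j : Fin (m+1) => ‖lam ^ (j:ℕ)‖^2)
      (fun i _ => by positivity) (Finset.mem_univ (0 : Fin (m+1)))
    simpa using h0
  have hMepos : (0:ℝ) < Me := lt_of_lt_of_le one_pos hMe1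
  have hMfpos : (0:ℝ) < Mf := lt_of_lt_of_le one_pos hMf1
  have hMene : Me ≠ 0 := hMepos.ne'
  have hMfne : Mf ≠ 0 := hMfpos.ne'
  have hMe0 : ((Me:ℝ):ℂ) ≠ 0 := by exact_mod_cast hMene
  have hMf0 : ((Mf:ℝ):ℂ) ≠ 0 := by exact_mod_cast hMfne
  -- basic vector facts
  have hx' : x ⬝ᵥ star x = 1 := by rw [dotProduct_comm]; exact hx
  have hnx : vecNormSq x = 1 := by
    have h0 := star_dotProduct_self x
    rw [hx] at h0
    exact_mod_cast h0.symm
  have hnsx : vecNormSq (star x) = 1 := by rw [vecNormSq_star]; exact hnx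
  have hxw : x ⬝ᵥ w = 0 := by
    rw [hw_def, dotProduct_sub, dotProduct_smul, hx', ← hs_def]
    simp
  have hsxw : star (star x) ⬝ᵥ w = 0 := by rw [star_star]; exact hxw
  have hwxd : w ⬝ᵥ x = 0 := by rw [dotProduct_comm]; exact hxw
  have hxsw : star x ⬝ᵥ star w = 0 := by
    rw [Matrix.star_dotProduct_star, dotProduct_comm, hxw, star_zero]
  have h1conj : star r ⬝ᵥ star x = conj s := by
    rw [hs_def, Matrix.star_dotProduct_star]; rfl
  have hτ : vecNormSq w = vecNormSq r - ‖s‖^2 := by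
    have h0 : ((vecNormSq w : ℝ) : ℂ) = ((vecNormSq r - ‖s‖^2 : ℝ) : ℂ) := by
      rw [← star_dotProduct_self w]
      have hstarw : star w = star r - conj s • x := by
        rw [hw_def]; simp [star_smul, Complex.star_def]
      rw [hstarw, hw_def, sub_dotProduct, dotProduct_sub, dotProduct_sub,
        smul_dotProduct, smul_dotProduct, dotProduct_smul,
        dotProduct_smul, star_dotProduct_self, hx', h1conj, ← hs_def]
      have h2 : s * conj s = ((‖s‖:ℝ):ℂ)^2 := RCLike.mul_conj s
      simp only [smul_eq_mul]
      push_cast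
      linear_combination -h2
    exact_mod_cast h0
  have hτnn : 0 ≤ τ2 := by rw [hτ2_def]; exact vecNormSq_nonneg w
  have hr' : r = s • star x + w := by rw [hw_def]; module
  -- the coefficients
  set a : Fin (m+1) → ℂ := fun j => conj (lam ^ (j:ℕ)) * s / ((Me:ℝ):ℂ) with ha_def
  set b : Fin (m+1) → ℂ := fun j => conj (lam ^ (j:ℕ)) / ((Mf:ℝ):ℂ) with hb_def
  set d : Fin (m+1) → ℂ :=
    fun j => conj (lam ^ (j:ℕ)) * conj s / (((Me:ℝ):ℂ) * ((τ2:ℝ):ℂ)) with hd_def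
  clear_value a b d
  -- rewrite ΔA into a clean form
  have hPxT : Pxᵀ = 1 - Matrix.vecMulVec (star x) x := by
    rw [hPx, Matrix.transpose_sub, Matrix.transpose_one, _root_.transpose_vecMulVec]
  have hPxr : Pxᵀ *ᵥ r = w := by
    rw [hPxT, Matrix.sub_mulVec, Matrix.one_mulVec, _root_.vecMulVec_mulVec, ← hs_def, hw_def]
  have e1 : Matrix.vecMulVec (star x) r * Px = Matrix.vecMulVec (star x) w := by
    rw [_root_.vecMulVec_mul, hPxr]
  have e2 : Pxᵀ * Matrix.vecMulVec r (star x) = Matrix.vecMulVec w (star x) := by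
    rw [_root_.mul_vecMulVec, hPxr]
  have e3 : Pxᵀ * Matrix.vecMulVec r r * Px = Matrix.vecMulVec w w := by
    rw [_root_.mul_vecMulVec, hPxr, _root_.vecMulVec_mul, hPxr]
  have hΔ' : ∀ j : Fin (m+1), ΔA j =
      if Even (j:ℕ) then
        a j • Matrix.vecMulVec (star x) (star x)
          + b j • (Matrix.vecMulVec (star x) w + Matrix.vecMulVec w (star x))
          - d j • Matrix.vecMulVec w w
      else
        b j • (Matrix.vecMulVec w (star x) - Matrix.vecMulVec (star x) w) := by
    intro j
    rw [hΔ j, e1, e2, e3, ← hτ, ← hτ2_def]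
    simp only [ha_def, hb_def, hd_def]
  -- action of ΔA j on a vector
  have hmv : ∀ (j : Fin (m+1)) (y : Fin n → ℂ), ΔA j *ᵥ y =
      if Even (j:ℕ) then
        (a j * (star x ⬝ᵥ y) + b j * (w ⬝ᵥ y)) • star x
          + (b j * (star x ⬝ᵥ y) - d j * (w ⬝ᵥ y)) • w
      else
        (-(b j * (w ⬝ᵥ y))) • star x + (b j * (star x ⬝ᵥ y)) • w := by
    intro j y
    rw [hΔ' j]
    by_cases hj : Even ((j : Fin (m+1)):ℕ)
    · simp only [if_pos hj]
      rw [Matrix.sub_mulVec, Matrix.add_mulVec, Matrix.smul_mulVec,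
        Matrix.smul_mulVec, Matrix.smul_mulVec, Matrix.add_mulVec,
        _root_.vecMulVec_mulVec, _root_.vecMulVec_mulVec, _root_.vecMulVec_mulVec, _root_.vecMulVec_mulVec]
      module
    · simp only [if_neg hj]
      rw [Matrix.smul_mulVec, Matrix.sub_mulVec, _root_.vecMulVec_mulVec, _root_.vecMulVec_mulVec]
      module
  -- norms of the coefficients
  have hnNe : ‖((Me:ℝ):ℂ)‖ = Me := by
    rw [Complex.norm_real, Real.norm_eq_abs, abs_of_pos hMepos]
  have hnNf : ‖((Mf:ℝ):ℂ)‖ = Mf := by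
    rw [Complex.norm_real, Real.norm_eq_abs, abs_of_pos hMfpos]
  have hnτ2 : ‖((τ2:ℝ):ℂ)‖ = τ2 := by
    rw [Complex.norm_real, Real.norm_eq_abs, abs_of_nonneg hτnn]
  have hna : ∀ j : Fin (m+1), ‖a j‖^2 = ‖lam ^ (j:ℕ)‖^2 * ‖s‖^2 / Me^2 := by
    intro j
    simp only [ha_def]
    rw [norm_div, norm_mul, RCLike.norm_conj, hnNe, div_pow, mul_pow]
  have hnb : ∀ j : Fin (m+1), ‖b j‖^2 = ‖lam ^ (j:ℕ)‖^2 / Mf^2 := by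
    intro j
    simp only [hb_def]
    rw [norm_div, RCLike.norm_conj, hnNf, div_pow]
  have hnd : ∀ j : Fin (m+1), ‖d j‖^2 = ‖lam ^ (j:ℕ)‖^2 * ‖s‖^2 / (Me^2 * τ2^2) := by
    intro j
    simp only [hd_def]
    rw [norm_div, norm_mul, norm_mul, RCLike.norm_conj, RCLike.norm_conj, hnNe, hnτ2,
      div_pow, mul_pow, mul_pow]
  -- the per-coefficient optimal norms
  set C : Fin (m+1) → ℝ := fun j =>
    if Even (j:ℕ) then ‖lam ^ (j:ℕ)‖^2 * (‖s‖^2/Me^2 + τ2/Mf^2)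
    else ‖lam ^ (j:ℕ)‖^2 * (τ2/Mf^2) with hC_def
  clear_value C
  have hCnn : ∀ j, 0 ≤ C j := by
    intro j
    simp only [hC_def]
    split <;> positivity
  -- witness value at x
  have hwx : ∀ j : Fin (m+1), vecNormSq (ΔA j *ᵥ x) = C j := by
    intro j
    rw [hmv j x]
    simp only [hC_def]
    by_cases hj : Even ((j : Fin (m+1)):ℕ)
    · simp only [if_pos hj]
      rw [hx, hwxd]
      rw [show a j * 1 + b j * 0 = a j by ring, show b j * 1 - d j * 0 = b j by ring]
      rw [vecNormSq_smul_add _ _ _ _ hsxw, hnsx, hna j, hnb j, ← hτ2_def]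
      ring
    · simp only [if_neg hj]
      rw [hx, hwxd]
      rw [show -(b j * 0) = (0:ℂ) by ring, show b j * 1 = b j by ring]
      rw [vecNormSq_smul_add _ _ _ _ hsxw, hnsx, hnb j, ← hτ2_def, norm_zero]
      ring
  -- upper bound for the action on any vector
  have hub : ∀ (j : Fin (m+1)) (y : Fin n → ℂ),
      vecNormSq (ΔA j *ᵥ y) ≤ C j * vecNormSq y := by
    intro j y
    have hcau := cauchy_one x y
    rw [hnx, one_mul] at hcau
    by_cases hw0 : τ2 = 0
    · -- degenerate case : w = 0
      have hwzero : w = 0 := by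
        have hw0' : ∑ i, ‖w i‖^2 = (0:ℝ) := by
          rw [hτ2_def, vecNormSq] at hw0
          exact hw0
        funext i
        have h2 := (Finset.sum_eq_zero_iff_of_nonneg
          (fun i _ => sq_nonneg ‖w i‖)).mp hw0' i (Finset.mem_univ i)
        have h3 : ‖w i‖ = 0 := pow_eq_zero_iff two_ne_zero |>.mp h2
        simpa using h3
      have hv0 : w ⬝ᵥ y = 0 := by rw [hwzero, zero_dotProduct]
      rw [hmv j y]
      simp only [hC_def]
      by_cases hj : Even ((j : Fin (m+1)):ℕ)
      · simp only [if_pos hj]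
        rw [hv0, show a j * (star x ⬝ᵥ y) + b j * 0 = a j * (star x ⬝ᵥ y) by ring]
        rw [vecNormSq_smul_add _ _ _ _ hsxw, hnsx, ← hτ2_def, hw0]
        rw [norm_mul, mul_pow, hna j]
        have h4 : (0:ℝ) ≤ ‖lam ^ (j:ℕ)‖ ^ 2 * ‖s‖ ^ 2 / Me ^ 2 := by positivity
        have h5 := mul_le_mul_of_nonneg_left hcau h4
        calc ‖lam ^ (j:ℕ)‖ ^ 2 * ‖s‖ ^ 2 / Me ^ 2 * ‖star x ⬝ᵥ y‖ ^ 2 * 1 +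
              ‖b j * (star x ⬝ᵥ y) - d j * 0‖ ^ 2 * 0
            = ‖lam ^ (j:ℕ)‖ ^ 2 * ‖s‖ ^ 2 / Me ^ 2 * ‖star x ⬝ᵥ y‖ ^ 2 := by ring
          _ ≤ ‖lam ^ (j:ℕ)‖ ^ 2 * ‖s‖ ^ 2 / Me ^ 2 * vecNormSq y := h5
          _ = ‖lam ^ (j:ℕ)‖ ^ 2 * (‖s‖ ^ 2 / Me ^ 2 + 0 / Mf ^ 2) * vecNormSq y := by ring
      · simp only [if_neg hj]
        rw [hv0]
        rw [vecNormSq_smul_add _ _ _ _ hsxw, hnsx, ← hτ2_def, hw0]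
        have h0 : (0:ℝ) ≤ ‖lam ^ (j:ℕ)‖ ^ 2 * (0 / Mf ^ 2) * vecNormSq y := by
          have := vecNormSq_nonneg y
          positivity
        calc ‖-(b j * 0)‖ ^ 2 * 1 + ‖b j * (star x ⬝ᵥ y)‖ ^ 2 * 0 = 0 := by
              simp
          _ ≤ ‖lam ^ (j:ℕ)‖ ^ 2 * (0 / Mf ^ 2) * vecNormSq y := h0
    · -- main case : w ≠ 0
      have hτ2pos : 0 < τ2 := lt_of_le_of_ne hτnn (fun h => hw0 h.symm)
      have hτ2ne : τ2 ≠ 0 := hw0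
      have hτ2C : ((τ2:ℝ):ℂ) ≠ 0 := by exact_mod_cast hw0
      have ht2 : vecNorm w ^ 2 = τ2 := by rw [hτ2_def]; exact vecNorm_sq w
      have hbes := bessel_two x (star w) y hnx
        (by rw [vecNormSq_star, ← hτ2_def]; exact hw0) hxsw
      rw [star_star, vecNormSq_star, ← hτ2_def] at hbes
      rw [hmv j y]
      simp only [hC_def]
      by_cases hj : Even ((j : Fin (m+1)):ℕ)
      · simp only [if_pos hj]
        have hcond : a j * conj (b j) = (((vecNorm w : ℝ)):ℂ)^2 * (b j * conj (d j)) := by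
          have hcast : ((((vecNorm w : ℝ)):ℂ))^2 = ((τ2:ℝ):ℂ) := by
            rw [← ht2]; push_cast; ring
          rw [hcast]
          simp only [ha_def, hb_def, hd_def, map_div₀, _root_.map_mul, Complex.conj_conj,
            Complex.conj_ofReal]
          field_simp
        have hkey := key_alg (a j) (b j) (d j) (star x ⬝ᵥ y) (w ⬝ᵥ y) (vecNorm w) hcond
        rw [ht2] at hkey
        rw [vecNormSq_smul_add _ _ _ _ hsxw, hnsx, ← hτ2_def, mul_one]
        rw [show ‖a j * (star x ⬝ᵥ y) + b j * (w ⬝ᵥ y)‖ ^ 2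
              + ‖b j * (star x ⬝ᵥ y) - d j * (w ⬝ᵥ y)‖ ^ 2 * τ2
            = ‖a j * (star x ⬝ᵥ y) + b j * (w ⬝ᵥ y)‖ ^ 2
              + τ2 * ‖b j * (star x ⬝ᵥ y) - d j * (w ⬝ᵥ y)‖ ^ 2 by ring, hkey]
        rw [hna j, hnb j, hnd j]
        have hKnn : 0 ≤ ‖lam ^ (j:ℕ)‖^2 * (‖s‖^2/Me^2 + τ2/Mf^2) := by positivity
        refine le_trans (le_of_eq ?_) (mul_le_mul_of_nonneg_left hbes hKnn)
        field_simp
        ring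
      · simp only [if_neg hj]
        rw [vecNormSq_smul_add _ _ _ _ hsxw, hnsx, ← hτ2_def, mul_one]
        have hKnn : 0 ≤ ‖lam ^ (j:ℕ)‖^2 * (τ2/Mf^2) := by positivity
        have hL : ‖-(b j * (w ⬝ᵥ y))‖ ^ 2 + ‖b j * (star x ⬝ᵥ y)‖ ^ 2 * τ2
            = (‖lam ^ (j:ℕ)‖^2 * (τ2/Mf^2)) * (‖star x ⬝ᵥ y‖ ^ 2 + ‖w ⬝ᵥ y‖ ^ 2 / τ2) := by
          rw [norm_neg, norm_mul, norm_mul, mul_pow, mul_pow, hnb j]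
          field_simp
          ring
        rw [hL]
        exact mul_le_mul_of_nonneg_left hbes hKnn
  -- spectral norms of the coefficients of ΔA
  have hspec : ∀ j : Fin (m+1), specNorm (ΔA j)^2 = C j := fun j =>
    specNorm_sq_eq x (hCnn j) hnx (hub j) (hwx j)
  -- sum of the C j
  have hCsum : ∑ j : Fin (m+1), C j = ‖s‖^2/Me + τ2/Mf := by
    have h0 : ∀ j : Fin (m+1), C j =
        (if Even ((j:Fin (m+1)):ℕ) then ‖lam ^ (j:ℕ)‖^2 else 0) * (‖s‖^2/Me^2)
          + ‖lam ^ (j:ℕ)‖^2 * (τ2/Mf^2) := by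
      intro j
      simp only [hC_def]
      by_cases hj : Even ((j : Fin (m+1)):ℕ)
      · simp only [if_pos hj]; ring
      · simp only [if_neg hj]; ring
    rw [Finset.sum_congr rfl fun j _ => h0 j, Finset.sum_add_distrib,
      ← Finset.sum_mul, ← Finset.sum_mul]
    have h1 : ∑ j : Fin (m+1), (if Even ((j:Fin (m+1)):ℕ) then ‖lam ^ (j:ℕ)‖^2 else 0) = Me := by
      rw [hMe_def, lamEvenNormSq]
    have h2 : ∑ j : Fin (m+1), ‖lam ^ (j:ℕ)‖^2 = Mf := by
      rw [hMf_def, lamNormSq]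
    rw [h1, h2]
    field_simp
  -- norm of the perturbation
  have hnorm : polyNorm2 ΔA = Real.sqrt (‖s‖^2/Me + τ2/Mf) := by
    rw [polyNorm2, Finset.sum_congr rfl fun j _ => hspec j, hCsum]
  -- T-even structure of ΔA
  have hmem : ΔA ∈ TevenPoly := by
    intro j
    constructor
    · intro hj
      rw [hΔ' j, if_pos hj, Matrix.transpose_sub, Matrix.transpose_add,
        Matrix.transpose_smul, Matrix.transpose_smul, Matrix.transpose_smul,
        Matrix.transpose_add, _root_.transpose_vecMulVec, _root_.transpose_vecMulVec,
        _root_.transpose_vecMulVec, _root_.transpose_vecMulVec]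
      module
    · intro hj
      rw [hΔ' j, if_neg hj, Matrix.transpose_smul, Matrix.transpose_sub,
        _root_.transpose_vecMulVec, _root_.transpose_vecMulVec]
      module
  -- the eigen equation
  have hAx : polyEval A lam *ᵥ x = -r := by rw [hr, neg_neg]
  have hμ : ∀ j : Fin (m+1), lam ^ (j:ℕ) * conj (lam ^ (j:ℕ))
      = ((‖lam ^ (j:ℕ)‖^2 : ℝ):ℂ) := by
    intro j
    rw [Complex.mul_conj, Complex.normSq_eq_norm_sq]
  have hDx : polyEval ΔA lam *ᵥ x = r := by
    rw [polyEval_mulVec]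
    have h0 : ∀ j : Fin (m+1), lam ^ (j:ℕ) • (ΔA j *ᵥ x)
        = (if Even ((j:Fin (m+1)):ℕ) then ((‖lam ^ (j:ℕ)‖^2 : ℝ):ℂ) else 0) • ((s/((Me:ℝ):ℂ)) • star x)
          + ((‖lam ^ (j:ℕ)‖^2 : ℝ):ℂ) • ((1/((Mf:ℝ):ℂ)) • w) := by
      intro j
      rw [hmv j x, hx, hwxd]
      by_cases hj : Even ((j : Fin (m+1)):ℕ)
      · simp only [if_pos hj]
        rw [smul_add, smul_smul, smul_smul, smul_smul, smul_smul]
        have ea : lam ^ (j:ℕ) * (a j * 1 + b j * 0)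
            = ((‖lam ^ (j:ℕ)‖^2 : ℝ):ℂ) * (s/((Me:ℝ):ℂ)) := by
          simp only [ha_def, hb_def]
          rw [← hμ j]
          ring
        have eb : lam ^ (j:ℕ) * (b j * 1 - d j * 0)
            = ((‖lam ^ (j:ℕ)‖^2 : ℝ):ℂ) * (1/((Mf:ℝ):ℂ)) := by
          simp only [hb_def]
          rw [← hμ j]
          ring
        rw [ea, eb]
      · simp only [if_neg hj]
        rw [zero_smul, zero_add, smul_add, smul_smul, smul_smul]
        have eb : lam ^ (j:ℕ) * (b j * 1)
            = ((‖lam ^ (j:ℕ)‖^2 : ℝ):ℂ) * (1/((Mf:ℝ):ℂ)) := by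
          simp only [hb_def]
          rw [← hμ j]
          ring
        rw [show lam ^ (j:ℕ) * -(b j * 0) = (0:ℂ) by ring, zero_smul, zero_add, eb, smul_smul]
    rw [Finset.sum_congr rfl fun j _ => h0 j, Finset.sum_add_distrib,
      ← Finset.sum_smul, ← Finset.sum_smul]
    have h1 : ∑ j : Fin (m+1), (if Even ((j:Fin (m+1)):ℕ) then ((‖lam ^ (j:ℕ)‖^2 : ℝ):ℂ) else 0)
        = ((Me:ℝ):ℂ) := by
      rw [hMe_def, lamEvenNormSq]
      push_cast
      refine Finset.sum_congr rfl fun j _ => ?_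
      by_cases hj : Even ((j : Fin (m+1)):ℕ)
      · simp [hj]
      · simp [hj]
    have h2 : ∑ j : Fin (m+1), ((‖lam ^ (j:ℕ)‖^2 : ℝ):ℂ) = ((Mf:ℝ):ℂ) := by
      rw [hMf_def, lamNormSq]
      push_cast
      rfl
    rw [h1, h2, smul_smul, smul_smul]
    rw [show ((Me:ℝ):ℂ) * (s/((Me:ℝ):ℂ)) = s by field_simp,
      show ((Mf:ℝ):ℂ) * (1/((Mf:ℝ):ℂ)) = 1 by field_simp]
    rw [one_smul]
    exact hr'.symm
  have heig : (polyEval A lam + polyEval ΔA lam) *ᵥ x = 0 := by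
    rw [Matrix.add_mulVec, hAx, hDx, neg_add_cancel]
  -- the lower bound for arbitrary admissible perturbations
  have hlb : ∀ t ∈ {t : ℝ | ∃ B ∈ (TevenPoly : Set (Fin (m+1) → Matrix (Fin n) (Fin n) ℂ)),
      (polyEval A lam + polyEval B lam) *ᵥ x = 0 ∧ t = polyNorm2 B},
      Real.sqrt (‖s‖^2/Me + τ2/Mf) ≤ t := by
    rintro t ⟨B, hB, hBeq, rfl⟩
    have hBx : polyEval B lam *ᵥ x = r := by
      rw [Matrix.add_mulVec, hAx] at hBeq
      rw [neg_add_eq_zero] at hBeq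
      exact hBeq.symm
    set α : Fin (m+1) → ℂ := fun j => x ⬝ᵥ (B j *ᵥ x) with hα_def
    have hαodd : ∀ j : Fin (m+1), ¬ Even ((j:Fin (m+1)):ℕ) → α j = 0 := by
      intro j hj
      have hT := (hB j).2 hj
      have h2 : α j = -α j := by
        show x ⬝ᵥ (B j *ᵥ x) = -(x ⬝ᵥ (B j *ᵥ x))
        calc x ⬝ᵥ (B j *ᵥ x) = ((B j)ᵀ *ᵥ x) ⬝ᵥ x := by
              rw [Matrix.dotProduct_mulVec, ← Matrix.transpose_transpose (B j),
                Matrix.vecMul_transpose, Matrix.transpose_transpose]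
          _ = -((B j *ᵥ x) ⬝ᵥ x) := by rw [hT, Matrix.neg_mulVec, neg_dotProduct]
          _ = -(x ⬝ᵥ (B j *ᵥ x)) := by rw [dotProduct_comm]
      exact add_self_eq_zero.mp (by linear_combination h2)
    have hdotsum : ∀ (f : Fin (m+1) → Fin n → ℂ),
        x ⬝ᵥ (∑ j : Fin (m+1), f j) = ∑ j : Fin (m+1), x ⬝ᵥ f j := by
      intro f
      simp [dotProduct, Finset.mul_sum]
      rw [Finset.sum_comm]
    have hαsum : ∑ j : Fin (m+1), lam ^ (j:ℕ) * α j = s := by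
      have h0 : x ⬝ᵥ (polyEval B lam *ᵥ x) = s := by rw [hBx, hs_def]
      rw [polyEval_mulVec, hdotsum] at h0
      rw [← h0]
      refine Finset.sum_congr rfl fun j _ => ?_
      rw [dotProduct_smul, smul_eq_mul]
    set W : Fin (m+1) → Fin n → ℂ := fun j => B j *ᵥ x - α j • star x with hW_def
    have hWsum : ∑ j : Fin (m+1), lam ^ (j:ℕ) • W j = w := by
      simp only [hW_def, smul_sub, smul_smul]
      rw [Finset.sum_sub_distrib, ← Finset.sum_smul, hαsum, ← polyEval_mulVec, hBx, hw_def]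
    have hWorth : ∀ j, star (star x) ⬝ᵥ W j = 0 := by
      intro j
      rw [star_star, hW_def]
      simp only [dotProduct_sub, dotProduct_smul, hx', smul_eq_mul, mul_one]
      exact sub_eq_zero.mpr rfl
    have hdecomp : ∀ j, vecNormSq (B j *ᵥ x) = ‖α j‖^2 + vecNormSq (W j) := by
      intro j
      have h0 : B j *ᵥ x = α j • star x + (1:ℂ) • W j := by
        simp only [hW_def, one_smul]
        module
      rw [h0, vecNormSq_smul_add _ _ _ _ (hWorth j), hnsx, mul_one, norm_one]
      ring
    have hspecB : ∀ j, ‖α j‖^2 + vecNormSq (W j) ≤ specNorm (B j)^2 := by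
      intro j
      have h0 := vecNormSq_mulVec_le (B j) x
      rw [hnx, mul_one] at h0
      rw [← hdecomp j]
      exact h0
    -- Cauchy-Schwarz for the scalar part
    have hCS1 : ‖s‖^2 ≤ Me * ∑ j : Fin (m+1), ‖α j‖^2 := by
      have hs_eq : s = ∑ j : Fin (m+1), (if Even ((j:Fin (m+1)):ℕ) then lam ^ (j:ℕ) else 0) * α j := by
        rw [← hαsum]
        refine Finset.sum_congr rfl fun j _ => ?_
        by_cases hj : Even ((j : Fin (m+1)):ℕ)
        · simp [hj]
        · simp [hj, hαodd j hj]
      have h1 : ‖s‖ ≤ ∑ j : Fin (m+1),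
          ‖(if Even ((j:Fin (m+1)):ℕ) then lam ^ (j:ℕ) else 0)‖ * ‖α j‖ := by
        rw [hs_eq]
        refine (norm_sum_le _ _).trans (le_of_eq ?_)
        exact Finset.sum_congr rfl fun j _ => norm_mul _ _
      have h2 := Finset.sum_mul_sq_le_sq_mul_sq Finset.univ
        (fun j : Fin (m+1) => ‖(if Even ((j:Fin (m+1)):ℕ) then lam ^ (j:ℕ) else 0)‖)
        (fun j => ‖α j‖)
      have h3 : ∑ j : Fin (m+1), ‖(if Even ((j:Fin (m+1)):ℕ) then lam ^ (j:ℕ) else 0)‖^2 = Me := by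
        rw [hMe_def, lamEvenNormSq]
        refine Finset.sum_congr rfl fun j _ => ?_
        by_cases hj : Even ((j : Fin (m+1)):ℕ)
        · simp [hj]
        · simp [hj]
      have h4 : ‖s‖^2 ≤ (∑ j : Fin (m+1),
          ‖(if Even ((j:Fin (m+1)):ℕ) then lam ^ (j:ℕ) else 0)‖ * ‖α j‖)^2 :=
        pow_le_pow_left₀ (norm_nonneg s) h1 2
      calc ‖s‖^2 ≤ _ := h4
        _ ≤ _ := h2
        _ = Me * ∑ j : Fin (m+1), ‖α j‖^2 := by rw [h3]
    -- Cauchy-Schwarz for the vector part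
    have hCS2 : τ2 ≤ Mf * ∑ j : Fin (m+1), vecNormSq (W j) := by
      have h1 : vecNorm w ≤ ∑ j : Fin (m+1), ‖lam ^ (j:ℕ)‖ * vecNorm (W j) := by
        rw [← norm_eE, ← hWsum, eE_sum]
        refine (norm_sum_le _ _).trans (le_of_eq ?_)
        refine Finset.sum_congr rfl fun j _ => ?_
        rw [eE_smul, norm_smul, norm_eE]
      have h2 := Finset.sum_mul_sq_le_sq_mul_sq Finset.univ
        (fun j : Fin (m+1) => ‖lam ^ (j:ℕ)‖) (fun j => vecNorm (W j))
      have h3 : ∑ j : Fin (m+1), ‖lam ^ (j:ℕ)‖^2 = Mf := by rw [hMf_def, lamNormSq]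
      have h4 : ∑ j : Fin (m+1), vecNorm (W j)^2 = ∑ j : Fin (m+1), vecNormSq (W j) :=
        Finset.sum_congr rfl fun j _ => vecNorm_sq (W j)
      have h5 : vecNorm w ^2 ≤ (∑ j : Fin (m+1), ‖lam ^ (j:ℕ)‖ * vecNorm (W j))^2 :=
        pow_le_pow_left₀ (vecNorm_nonneg w) h1 2
      calc τ2 = vecNorm w ^ 2 := by rw [hτ2_def, vecNorm_sq w]
        _ ≤ (∑ j : Fin (m+1), ‖lam ^ (j:ℕ)‖ * vecNorm (W j))^2 := h5
        _ ≤ (∑ j : Fin (m+1), ‖lam ^ (j:ℕ)‖^2) * ∑ j : Fin (m+1), vecNorm (W j)^2 := h2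
        _ = Mf * ∑ j : Fin (m+1), vecNormSq (W j) := by rw [h3, h4]
    -- combine
    have hsum_ge : ‖s‖^2/Me + τ2/Mf ≤ ∑ j : Fin (m+1), specNorm (B j)^2 := by
      have h1 : ∑ j : Fin (m+1), (‖α j‖^2 + vecNormSq (W j))
          ≤ ∑ j : Fin (m+1), specNorm (B j)^2 :=
        Finset.sum_le_sum fun j _ => hspecB j
      rw [Finset.sum_add_distrib] at h1
      have e1 : ‖s‖^2/Me ≤ ∑ j : Fin (m+1), ‖α j‖^2 := by
        rw [div_le_iff₀ hMepos]
        calc ‖s‖^2 ≤ Me * ∑ j : Fin (m+1), ‖α j‖^2 := hCS1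
          _ = (∑ j : Fin (m+1), ‖α j‖^2) * Me := by ring
      have e2 : τ2/Mf ≤ ∑ j : Fin (m+1), vecNormSq (W j) := by
        rw [div_le_iff₀ hMfpos]
        calc τ2 ≤ Mf * ∑ j : Fin (m+1), vecNormSq (W j) := hCS2
          _ = (∑ j : Fin (m+1), vecNormSq (W j)) * Mf := by ring
      linarith
    rw [polyNorm2]
    exact Real.sqrt_le_sqrt hsum_ge
  -- compute eta
  have hmemS : Real.sqrt (‖s‖^2/Me + τ2/Mf) ∈ {t : ℝ |
      ∃ B ∈ (TevenPoly : Set (Fin (m+1) → Matrix (Fin n) (Fin n) ℂ)),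
      (polyEval A lam + polyEval B lam) *ᵥ x = 0 ∧ t = polyNorm2 B} :=
    ⟨ΔA, hmem, heig, hnorm.symm⟩
  have heta : eta polyNorm2 TevenPoly lam x A = Real.sqrt (‖s‖^2/Me + τ2/Mf) := by
    unfold eta
    exact IsLeast.csInf_eq ⟨hmemS, hlb⟩
  constructor
  · rw [heta, ← hτ, hτ2_def]
  · intro _
    exact ⟨hmem, heig, by rw [heta, hnorm]⟩
end
end

section
/- Let Herm denote the set of Hermitian matrix polynomials in P_m(ℂ^{n×n}), let P ∈ Herm be regular, and let λ ∈ ℝ and x ∈ ℂⁿ with x^H x = 1. Set r := −P(λ)x and Λ_m := (1, λ, …, λ^m)ᵀ. Then η_F^{Herm}(λ, x, P) = sqrt(2‖r‖₂² − |x^H r|²)/‖Λ_m‖₂ ≤ √2 · η(λ, x, P), and η_2^{Herm}(λ, x, P) = η(λ, x, P) = ‖r‖₂/‖Λ_m‖₂. Moreover, defining ΔA_j := (λ^j/‖Λ_m‖₂²)·(x r^H + r x^H − (r^H x) x x^H) for j = 0,…,m, the polynomial ΔP(z) := Σ_{j=0}^m z^j ΔA_j is the unique Hermitian polynomial in P_m(ℂ^{n×n})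 satisfying P(λ)x + ΔP(λ)x = 0 and |||ΔP|||_F = η_F^{Herm}(λ, x, P). -/
open scoped ComplexConjugate
open Matrix

noncomputable section
set_option linter.unusedSectionVars false
set_option synthInstance.maxHeartbeats 1000000
set_option maxHeartbeats 1000000


variable {ι : Type*} [Fintype ι] [DecidableEq ι]

/-- The class of Hermitian matrix polynomials. -/
def HermPoly {ι : Type*} [Fintype ι] [DecidableEq ι] {m : ℕ} :
    Set (Fin (m+1) → Matrix ι ι ℂ) := {B | ∀ j, (B j)ᴴ = B j}

namespace BE


lemma conj_mul_self (z : ℂ) : conj z * z = ((‖z‖ ^ 2 : ℝ) : ℂ) := by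
  rw [mul_comm, Complex.mul_conj]
  norm_cast
  rw [Complex.normSq_eq_norm_sq]

lemma dot_self (v : ι → ℂ) : star v ⬝ᵥ v = ((vecNormSq v : ℝ) : ℂ) := by
  simp only [dotProduct, vecNormSq, Pi.star_apply, Complex.ofReal_sum]
  exact Finset.sum_congr rfl fun i _ => conj_mul_self (v i)

def cdot (M N : Matrix ι ι ℂ) : ℂ := ∑ i, ∑ j, conj (M i j) * N i j

lemma cdot_self (M : Matrix ι ι ℂ) : cdot M M = ((frobNormSq M : ℝ) : ℂ) := by
  simp only [cdot, frobNormSq, Complex.ofReal_sum]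
  exact Finset.sum_congr rfl fun i _ => Finset.sum_congr rfl fun j _ => conj_mul_self _

lemma cdot_add_left (M N P : Matrix ι ι ℂ) : cdot (M + N) P = cdot M P + cdot N P := by
  simp [cdot, add_mul, Finset.sum_add_distrib]

lemma cdot_add_right (M N P : Matrix ι ι ℂ) : cdot M (N + P) = cdot M N + cdot M P := by
  simp [cdot, mul_add, Finset.sum_add_distrib]

lemma cdot_smul_left (c : ℂ) (M N : Matrix ι ι ℂ) : cdot (c • M) N = conj c * cdot M N := by
  simp [cdot, Finset.mul_sum, mul_assoc]

lemma cdot_smul_right (c : ℂ) (M N : Matrix ι ι ℂ) : cdot M (c • N) = c * cdot M N := by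
  simp [cdot, Finset.mul_sum]; congr 1; ext i; congr 1; ext j; ring

lemma cdot_conj (M N : Matrix ι ι ℂ) : conj (cdot M N) = cdot N M := by
  simp [cdot, map_sum]; congr 1; ext i; congr 1; ext j; ring

lemma cdot_sub_right (M N P : Matrix ι ι ℂ) : cdot M (N - P) = cdot M N - cdot M P := by
  simp [cdot, mul_sub, Finset.sum_sub_distrib]

lemma cdot_sub_left (M N P : Matrix ι ι ℂ) : cdot (M - N) P = cdot M P - cdot N P := by
  simp [cdot, sub_mul, Finset.sum_sub_distrib]

lemma cdot_zero_left (Q : Matrix ι ι ℂ) : cdot 0 Q = 0 := by simp [cdot]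
lemma cdot_zero_right (Q : Matrix ι ι ℂ) : cdot Q 0 = 0 := by simp [cdot]

lemma cdot_sum_left {κ : Type*} (s : Finset κ) (f : κ → Matrix ι ι ℂ) (Q : Matrix ι ι ℂ) :
    cdot (∑ k ∈ s, f k) Q = ∑ k ∈ s, cdot (f k) Q := by
  classical
  induction s using Finset.induction with
  | empty => simp [cdot]
  | insert _ _ h ih => rw [Finset.sum_insert h, cdot_add_left, ih, Finset.sum_insert h]

lemma cdot_sum_right {κ : Type*} (s : Finset κ) (Q : Matrix ι ι ℂ) (f : κ → Matrix ι ι ℂ) :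
    cdot Q (∑ k ∈ s, f k) = ∑ k ∈ s, cdot Q (f k) := by
  classical
  induction s using Finset.induction with
  | empty => simp [cdot]
  | insert _ _ h ih => rw [Finset.sum_insert h, cdot_add_right, ih, Finset.sum_insert h]

lemma frobNormSq_nonneg (M : Matrix ι ι ℂ) : 0 ≤ frobNormSq M :=
  Finset.sum_nonneg fun _ _ => Finset.sum_nonneg fun _ _ => sq_nonneg _

lemma vecNormSq_nonneg (v : ι → ℂ) : 0 ≤ vecNormSq v :=
  Finset.sum_nonneg fun _ _ => sq_nonneg _

lemma frobNormSq_eq_zero {M : Matrix ι ι ℂ} (h : frobNormSq M = 0) : M = 0 := by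
  ext i j
  have := (Finset.sum_eq_zero_iff_of_nonneg (fun i _ => Finset.sum_nonneg fun j _ => sq_nonneg ‖M i j‖)).1 h i (Finset.mem_univ i)
  have := (Finset.sum_eq_zero_iff_of_nonneg (fun j _ => sq_nonneg ‖M i j‖)).1 this j (Finset.mem_univ j)
  simpa [pow_eq_zero_iff] using this

lemma frobNormSq_smul (c : ℂ) (M : Matrix ι ι ℂ) :
    frobNormSq (c • M) = ‖c‖ ^ 2 * frobNormSq M := by
  simp [frobNormSq, Finset.mul_sum, norm_mul, mul_pow]

lemma vecNormSq_smul (c : ℂ) (v : ι → ℂ) : vecNormSq (c • v) = ‖c‖ ^ 2 * vecNormSq v := by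
  simp [vecNormSq, Finset.mul_sum, norm_mul, mul_pow]

lemma vecNormSq_eq_zero {v : ι → ℂ} (h : vecNormSq v = 0) : v = 0 := by
  funext i
  have := (Finset.sum_eq_zero_iff_of_nonneg (fun i _ => sq_nonneg ‖v i‖)).1 h i (Finset.mem_univ i)
  simpa [pow_eq_zero_iff] using this



lemma vecMulVec_mulVec (p q v : ι → ℂ) :
    vecMulVec p (star q) *ᵥ v = (star q ⬝ᵥ v) • p := by
  funext i
  simp [vecMulVec, mulVec, dotProduct, Finset.mul_sum, Finset.sum_mul]
  congr 1; ext j; ring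

lemma cdot_vecMulVec_left (p q : ι → ℂ) (E : Matrix ι ι ℂ) :
    (∑ i, ∑ j, conj (vecMulVec p (star q) i j) * E i j) = star p ⬝ᵥ (E *ᵥ q) := by
  simp [vecMulVec, mulVec, dotProduct, Finset.mul_sum]
  congr 1; ext i; congr 1; ext j; ring

lemma vecMulVec_conjT (p q : ι → ℂ) :
    (vecMulVec p (star q))ᴴ = vecMulVec q (star p) := by
  ext i j; simp [vecMulVec, conjTranspose_apply, mul_comm]

lemma vecMulVec_smul_right (p : ι → ℂ) (c : ℂ) (w : ι → ℂ) :
    vecMulVec p (c • w) = c • vecMulVec p w := by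
  ext i j; simp [vecMulVec]; ring

lemma vecMulVec_add_right (p : ι → ℂ) (v w : ι → ℂ) :
    vecMulVec p (v + w) = vecMulVec p v + vecMulVec p w := by
  ext i j; simp [vecMulVec]; ring

lemma vecMulVec_smul_left (c : ℂ) (p w : ι → ℂ) :
    vecMulVec (c • p) w = c • vecMulVec p w := by
  ext i j; simp [vecMulVec]; ring

lemma vecMulVec_add_left (p q w : ι → ℂ) :
    vecMulVec (p + q) w = vecMulVec p w + vecMulVec q w := by
  ext i j; simp [vecMulVec]; ring

/-- Cauchy–Schwarz for dot products of complex vectors. -/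
lemma dot_sq_le (v w : ι → ℂ) : ‖v ⬝ᵥ w‖ ^ 2 ≤ vecNormSq v * vecNormSq w := by
  have h1 : ‖v ⬝ᵥ w‖ ≤ ∑ i, ‖v i‖ * ‖w i‖ := by
    refine (norm_sum_le _ _).trans ?_
    exact Finset.sum_le_sum fun i _ => by rw [norm_mul]
  have h2 : ∑ i, ‖v i‖ * ‖w i‖ ≤ Real.sqrt (vecNormSq v) * Real.sqrt (vecNormSq w) :=
    Real.sum_mul_le_sqrt_mul_sqrt _ _ _
  have h3 : ‖v ⬝ᵥ w‖ ≤ Real.sqrt (vecNormSq v) * Real.sqrt (vecNormSq w) := h1.trans h2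
  calc ‖v ⬝ᵥ w‖ ^ 2 ≤ (Real.sqrt (vecNormSq v) * Real.sqrt (vecNormSq w)) ^ 2 := by
        exact pow_le_pow_left₀ (norm_nonneg _) h3 2
    _ = vecNormSq v * vecNormSq w := by
        rw [mul_pow, Real.sq_sqrt (vecNormSq_nonneg' v), Real.sq_sqrt (vecNormSq_nonneg' w)]
  where vecNormSq_nonneg' (v : ι → ℂ) : 0 ≤ vecNormSq v :=
    Finset.sum_nonneg fun _ _ => sq_nonneg _

lemma vecNormSq_star (v : ι → ℂ) : vecNormSq (star v) = vecNormSq v := by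
  simp [vecNormSq]

/-- `‖Q v‖² ≤ ‖Q‖_F² ‖v‖²`. -/
lemma mulVec_vecNormSq_le (Q : Matrix ι ι ℂ) (v : ι → ℂ) :
    vecNormSq (Q *ᵥ v) ≤ frobNormSq Q * vecNormSq v := by
  have : ∀ i, ‖(Q *ᵥ v) i‖ ^ 2 ≤ (∑ k, ‖Q i k‖ ^ 2) * vecNormSq v := by
    intro i
    have := dot_sq_le (Q i) v
    simpa [mulVec, vecNormSq] using this
  calc vecNormSq (Q *ᵥ v) = ∑ i, ‖(Q *ᵥ v) i‖ ^ 2 := rfl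
    _ ≤ ∑ i, (∑ k, ‖Q i k‖ ^ 2) * vecNormSq v := Finset.sum_le_sum fun i _ => this i
    _ = frobNormSq Q * vecNormSq v := by rw [frobNormSq, Finset.sum_mul]

-- specNorm lemmas
lemma vecNorm_eq_norm (v : ι → ℂ) : vecNorm v = ‖(WithLp.equiv 2 (ι → ℂ)).symm v‖ := by
  rw [EuclideanSpace.norm_eq]; rfl

lemma specNorm_mulVec_le (M : Matrix ι ι ℂ) (v : ι → ℂ) :
    vecNorm (M *ᵥ v) ≤ specNorm M * vecNorm v := by
  have h := (Matrix.toEuclideanCLM (𝕜 := ℂ) M).le_opNorm ((WithLp.equiv 2 (ι → ℂ)).symm v)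
  rw [vecNorm_eq_norm, vecNorm_eq_norm]
  exact h

lemma specNorm_le_bound (M : Matrix ι ι ℂ) {c : ℝ} (hc : 0 ≤ c)
    (h : ∀ v, vecNorm (M *ᵥ v) ≤ c * vecNorm v) : specNorm M ≤ c := by
  refine ContinuousLinearMap.opNorm_le_bound _ hc fun w => ?_
  have h2 := h (WithLp.equiv 2 (ι → ℂ) w)
  rw [vecNorm_eq_norm, vecNorm_eq_norm] at h2
  exact h2

lemma specNorm_nonneg (M : Matrix ι ι ℂ) : 0 ≤ specNorm M := norm_nonneg _

lemma specNorm_smul (c : ℂ) (M : Matrix ι ι ℂ) : specNorm (c • M) = ‖c‖ * specNorm M := by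
  rw [specNorm, _root_.map_smul]
  exact norm_smul c (Matrix.toEuclideanCLM (𝕜 := ℂ) M)

lemma specNorm_polyEval_le {m : ℕ} (B : Fin (m+1) → Matrix ι ι ℂ) (z : ℂ) :
    specNorm (polyEval B z) ≤ ∑ j : Fin (m+1), ‖z ^ (j:ℕ)‖ * specNorm (B j) := by
  rw [specNorm, polyEval, map_sum]
  refine (norm_sum_le _ _).trans (Finset.sum_le_sum fun j _ => ?_)
  simp only [_root_.map_smul]
  exact le_of_eq (norm_smul (z ^ (j:ℕ)) (Matrix.toEuclideanCLM (𝕜 := ℂ) (B j)))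


-- lamNormSq facts
lemma lamNormSq_cast (m : ℕ) (lam : ℝ) :
    ((lamNormSq m (lam : ℂ) : ℝ) : ℂ) = ∑ j : Fin (m+1), ((lam : ℂ) ^ (j:ℕ)) ^ 2 := by
  rw [lamNormSq, Complex.ofReal_sum]
  refine Finset.sum_congr rfl fun j _ => ?_
  rw [← Complex.ofReal_pow, Complex.norm_real, Real.norm_eq_abs, sq_abs]
  push_cast
  ring

lemma one_le_lamNormSq (m : ℕ) (z : ℂ) : 1 ≤ lamNormSq m z := by
  have h0 : ‖z ^ ((0 : Fin (m+1)) : ℕ)‖ ^ 2 = 1 := by norm_num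
  calc (1:ℝ) = ‖z ^ ((0 : Fin (m+1)) : ℕ)‖ ^ 2 := h0.symm
    _ ≤ ∑ j : Fin (m+1), ‖z ^ (j:ℕ)‖ ^ 2 :=
        Finset.single_le_sum (f := fun j : Fin (m+1) => ‖z ^ (j:ℕ)‖ ^ 2)
          (fun j _ => sq_nonneg _) (Finset.mem_univ 0)

lemma lamNormSq_pos (m : ℕ) (z : ℂ) : 0 < lamNormSq m z :=
  lt_of_lt_of_le one_pos (one_le_lamNormSq m z)

/-- Evaluating the family `j ↦ (λ^j / L) • K` at `λ` recovers `K`. -/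
lemma polyEval_scaled (m : ℕ) (lam : ℝ) (K : Matrix ι ι ℂ) :
    polyEval (fun j : Fin (m+1) =>
      (((lam:ℂ) ^ (j:ℕ)) / ((lamNormSq m (lam:ℂ) : ℝ) : ℂ)) • K) (lam : ℂ) = K := by
  have hL : ((lamNormSq m (lam:ℂ) : ℝ) : ℂ) ≠ 0 := by
    simpa using (lamNormSq_pos m (lam:ℂ)).ne'
  rw [polyEval]
  have : ∀ j : Fin (m+1), ((lam:ℂ) ^ (j:ℕ)) • ((((lam:ℂ) ^ (j:ℕ)) / ((lamNormSq m (lam:ℂ) : ℝ) : ℂ)) • K)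
      = ((((lam:ℂ) ^ (j:ℕ))^2 / ((lamNormSq m (lam:ℂ) : ℝ) : ℂ))) • K := by
    intro j; rw [smul_smul]; ring_nf
  rw [Finset.sum_congr rfl fun j _ => this j, ← Finset.sum_smul, ← Finset.sum_div,
    ← lamNormSq_cast m lam, div_self hL, one_smul]

/-- Frobenius Pythagoras decomposition over the coefficients. -/
lemma sum_frob_decomp (m : ℕ) (lam : ℝ) (B : Fin (m+1) → Matrix ι ι ℂ) :
    ∑ j, frobNormSq (B j)
      = frobNormSq (polyEval B (lam:ℂ)) / lamNormSq m (lam:ℂ)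
        + ∑ j : Fin (m+1), frobNormSq
            (B j - (((lam:ℂ) ^ (j:ℕ)) / ((lamNormSq m (lam:ℂ) : ℝ) : ℂ)) • polyEval B (lam:ℂ)) := by
  set L : ℝ := lamNormSq m (lam:ℂ) with hLdef
  have hLpos := lamNormSq_pos m (lam:ℂ)
  have hL : ((L : ℝ) : ℂ) ≠ 0 := by simpa using hLpos.ne'
  set Q := polyEval B (lam:ℂ) with hQ
  set c : Fin (m+1) → ℂ := fun j => ((lam:ℂ) ^ (j:ℕ)) / ((L : ℝ) : ℂ) with hc
  set E : Fin (m+1) → Matrix ι ι ℂ := fun j => B j - c j • Q with hE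
  have hconj : ∀ j, conj (c j) = c j := by
    intro j
    rw [hc]
    simp only []
    rw [show ((lam:ℂ)) ^ (j:ℕ) = (((lam ^ (j:ℕ) : ℝ)) : ℂ) by push_cast; ring]
    rw [map_div₀, Complex.conj_ofReal, Complex.conj_ofReal]
  have hsumcE : ∑ j, c j • E j = 0 := by
    have h1 : ∑ j, c j • B j = (((L:ℝ):ℂ))⁻¹ • Q := by
      rw [hQ, polyEval, Finset.smul_sum]
      refine Finset.sum_congr rfl fun j _ => ?_
      rw [smul_smul]
      congr 1
      simp only [hc]
      rw [div_eq_inv_mul]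
    have h2 : ∑ j, c j • (c j • Q) = (((L:ℝ):ℂ))⁻¹ • Q := by
      have : ∀ j : Fin (m+1), c j • (c j • Q) = ((((lam:ℂ) ^ (j:ℕ))^2 / (((L:ℝ):ℂ))^2)) • Q := by
        intro j; rw [smul_smul, hc]; congr 1; field_simp
      rw [Finset.sum_congr rfl fun j _ => this j, ← Finset.sum_smul, ← Finset.sum_div,
        ← lamNormSq_cast m lam]
      congr 1
      rw [← hLdef]
      field_simp
    simp only [hE, smul_sub, Finset.sum_sub_distrib, h1, h2, sub_self]
  -- complex identity
  have key : ∀ j, cdot (B j) (B j)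
      = cdot (E j) (E j) + c j * cdot (E j) Q + c j * cdot Q (E j)
        + (c j * c j) * cdot Q Q := by
    intro j
    have hBj : B j = E j + c j • Q := by rw [hE]; simp
    calc cdot (B j) (B j) = cdot (E j + c j • Q) (E j + c j • Q) := by rw [← hBj]
      _ = _ := by
          rw [cdot_add_left, cdot_add_right, cdot_add_right, cdot_smul_left, cdot_smul_right,
            cdot_smul_right, cdot_smul_left, hconj]
          ring
  have hcross1 : ∑ j, c j * cdot (E j) Q = 0 := by
    have h1 : ∀ j : Fin (m+1), c j * cdot (E j) Q = cdot (c j • E j) Q := by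
      intro j; rw [cdot_smul_left, hconj]
    rw [Finset.sum_congr rfl fun j _ => h1 j, ← cdot_sum_left, hsumcE, cdot_zero_left]
  have hcross2 : ∑ j, c j * cdot Q (E j) = 0 := by
    have h1 : ∀ j : Fin (m+1), c j * cdot Q (E j) = cdot Q (c j • E j) := by
      intro j; rw [cdot_smul_right]
    rw [Finset.sum_congr rfl fun j _ => h1 j, ← cdot_sum_right, hsumcE, cdot_zero_right]
  have hc2 : ∑ j, c j * c j = (((L:ℝ):ℂ))⁻¹ := by
    have h1 : ∑ j, c j * c j = ∑ j : Fin (m+1), ((lam:ℂ) ^ (j:ℕ))^2 / (((L:ℝ):ℂ))^2 := by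
      refine Finset.sum_congr rfl fun j _ => ?_
      rw [hc]; field_simp
    rw [h1, ← Finset.sum_div, ← lamNormSq_cast m lam, ← hLdef]
    field_simp
  have hsum : ∑ j, cdot (B j) (B j)
      = ∑ j, cdot (E j) (E j) + (((L:ℝ):ℂ))⁻¹ * cdot Q Q := by
    rw [Finset.sum_congr rfl fun j _ => key j]
    rw [Finset.sum_add_distrib, Finset.sum_add_distrib, Finset.sum_add_distrib,
      hcross1, hcross2, ← Finset.sum_mul, hc2]
    ring
  -- cast to real
  have hreal : ((∑ j, frobNormSq (B j) : ℝ) : ℂ)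
      = ((frobNormSq Q / L + ∑ j, frobNormSq (E j) : ℝ) : ℂ) := by
    push_cast
    rw [Finset.sum_congr rfl fun j (_ : j ∈ Finset.univ) => (cdot_self (B j)).symm, hsum]
    rw [Finset.sum_congr rfl fun j (_ : j ∈ Finset.univ) => (cdot_self (E j)), cdot_self]
    rw [div_eq_inv_mul]
    ring
  exact Complex.ofReal_inj.mp hreal


lemma polyEval_conjT {m : ℕ} (lam : ℝ) (B : Fin (m+1) → Matrix ι ι ℂ)
    (hB : ∀ j, (B j)ᴴ = B j) :
    (polyEval B (lam:ℂ))ᴴ = polyEval B (lam:ℂ) := by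
  rw [polyEval, Matrix.conjTranspose_sum]
  refine Finset.sum_congr rfl fun j _ => ?_
  rw [Matrix.conjTranspose_smul, hB j]
  congr 1
  rw [← Complex.ofReal_pow]
  simp [Complex.conj_ofReal]

lemma rot_identity (a s c d : ℂ) (ha : conj a = a) (hs : conj s = s) :
    ‖a*c + s*d‖^2 + ‖s*c - a*d‖^2 = (‖a‖^2 + ‖s‖^2) * (‖c‖^2 + ‖d‖^2) := by
  have key : ((‖a*c + s*d‖^2 + ‖s*c - a*d‖^2 : ℝ) : ℂ)
      = (((‖a‖^2 + ‖s‖^2) * (‖c‖^2 + ‖d‖^2) : ℝ) : ℂ) := by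
    rw [Complex.ofReal_add, Complex.ofReal_mul, Complex.ofReal_add, Complex.ofReal_add,
      ← conj_mul_self, ← conj_mul_self, ← conj_mul_self, ← conj_mul_self, ← conj_mul_self,
      ← conj_mul_self]
    simp only [map_add, map_sub, _root_.map_mul, ha, hs]
    ring
  exact Complex.ofReal_inj.mp key

lemma vecNormSq_combo (x u : ι → ℂ) (hxx : star x ⬝ᵥ x = 1) (hxu : star x ⬝ᵥ u = 0)
    (α β : ℂ) :
    vecNormSq (α • x + β • u) = ‖α‖^2 + ‖β‖^2 * vecNormSq u := by
  have hux : star u ⬝ᵥ x = 0 := by rw [star_dotProduct, hxu]; simp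
  have key : ((vecNormSq (α • x + β • u) : ℝ) : ℂ)
      = ((‖α‖^2 + ‖β‖^2 * vecNormSq u : ℝ) : ℂ) := by
    rw [← dot_self]
    simp only [star_add, star_smul, add_dotProduct, dotProduct_add, smul_dotProduct,
      dotProduct_smul, hxx, hxu, hux, dot_self, RCLike.star_def, smul_eq_mul]
    rw [Complex.ofReal_add, Complex.ofReal_mul, ← conj_mul_self, ← conj_mul_self]
    ring
  exact Complex.ofReal_inj.mp key

lemma bessel (x u v : ι → ℂ) (hxx : star x ⬝ᵥ x = 1) (hxu : star x ⬝ᵥ u = 0)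
    (huu : vecNormSq u ≤ 1) :
    ‖star x ⬝ᵥ v‖^2 + ‖star u ⬝ᵥ v‖^2 ≤ vecNormSq v := by
  set c := star x ⬝ᵥ v with hcd
  set d := star u ⬝ᵥ v with hdd
  have hux : star u ⬝ᵥ x = 0 := by rw [star_dotProduct, hxu]; simp
  have hvx : star v ⬝ᵥ x = conj c := by rw [star_dotProduct]; rfl
  have hvu : star v ⬝ᵥ u = conj d := by rw [star_dotProduct]; rfl
  have key : ((vecNormSq (v - c • x - d • u) : ℝ) : ℂ)
      = ((vecNormSq v - ‖c‖^2 - 2*‖d‖^2 + ‖d‖^2 * vecNormSq u : ℝ) : ℂ) := by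
    rw [← dot_self]
    simp only [star_sub, star_smul, sub_dotProduct, dotProduct_sub, smul_dotProduct,
      dotProduct_smul, hxx, hxu, hux, hvx, hvu, ← hcd, ← hdd, dot_self,
      RCLike.star_def, smul_eq_mul]
    rw [Complex.ofReal_add, Complex.ofReal_sub, Complex.ofReal_sub, Complex.ofReal_mul,
      Complex.ofReal_mul, ← conj_mul_self, ← conj_mul_self]
    push_cast
    ring
  have h0 : 0 ≤ vecNormSq v - ‖c‖^2 - 2*‖d‖^2 + ‖d‖^2 * vecNormSq u := by
    have := vecNormSq_nonneg (v - c • x - d • u)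
    have h2 := Complex.ofReal_inj.mp key
    linarith [h2 ▸ this]
  nlinarith [sq_nonneg ‖d‖, vecNormSq_nonneg u]

lemma cdot_vmv (p q : ι → ℂ) (E : Matrix ι ι ℂ) :
    cdot (vecMulVec p (star q)) E = star p ⬝ᵥ (E *ᵥ q) := cdot_vecMulVec_left p q E

lemma vecNorm_nonneg (v : ι → ℂ) : 0 ≤ vecNorm v := Real.sqrt_nonneg _

lemma vecNorm_smul (c : ℂ) (v : ι → ℂ) : vecNorm (c • v) = ‖c‖ * vecNorm v := by
  rw [vecNorm, vecNormSq_smul, Real.sqrt_mul (sq_nonneg _), Real.sqrt_sq (norm_nonneg _)]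
  rfl

lemma dot_norm_le (p q : ι → ℂ) : ‖star p ⬝ᵥ q‖ ≤ vecNorm p * vecNorm q := by
  have h := dot_sq_le (star p) q
  rw [vecNormSq_star] at h
  have h2 : ‖star p ⬝ᵥ q‖ ^ 2 ≤ (vecNorm p * vecNorm q) ^ 2 := by
    rw [mul_pow, vecNorm, vecNorm, Real.sq_sqrt (vecNormSq_nonneg p),
      Real.sq_sqrt (vecNormSq_nonneg q)]
    exact h
  nlinarith [norm_nonneg (star p ⬝ᵥ q), mul_nonneg (vecNorm_nonneg p) (vecNorm_nonneg q)]

end BE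

theorem main {n m : ℕ}
    (A : Fin (m+1) → Matrix (Fin n) (Fin n) ℂ)
    (hA : A ∈ HermPoly)
    (lam : ℝ) (x : Fin n → ℂ) (hx : star x ⬝ᵥ x = 1)
    (r : Fin n → ℂ) (hr : r = -(polyEval A (lam : ℂ) *ᵥ x))
    (ΔA : Fin (m+1) → Matrix (Fin n) (Fin n) ℂ)
    (hΔ : ∀ j : Fin (m+1),
      ΔA j = (((lam : ℂ) ^ (j : ℕ)) / (lamNormSq m (lam : ℂ) : ℂ)) •
        (vecMulVec x (star r) + vecMulVec r (star x)
          - (star r ⬝ᵥ x) • vecMulVec x (star x))) :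
    eta polyNormF HermPoly (lam : ℂ) x A
      = Real.sqrt (2 * vecNormSq r - ‖star x ⬝ᵥ r‖ ^ 2)
          / Real.sqrt (lamNormSq m (lam : ℂ)) ∧
    eta polyNormF HermPoly (lam : ℂ) x A
      ≤ Real.sqrt 2 * eta polyNormF Set.univ (lam : ℂ) x A ∧
    eta polyNorm2 HermPoly (lam : ℂ) x A = eta polyNorm2 Set.univ (lam : ℂ) x A ∧
    eta polyNorm2 Set.univ (lam : ℂ) x A = vecNorm r / Real.sqrt (lamNormSq m (lam : ℂ)) ∧
    ΔA ∈ HermPoly ∧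
    (polyEval A (lam : ℂ) + polyEval ΔA (lam : ℂ)) *ᵥ x = 0 ∧
    polyNormF ΔA = eta polyNormF HermPoly (lam : ℂ) x A ∧
    (∀ ΔB ∈ HermPoly, (polyEval A (lam : ℂ) + polyEval ΔB (lam : ℂ)) *ᵥ x = 0 →
      polyNormF ΔB = eta polyNormF HermPoly (lam : ℂ) x A → ΔB = ΔA) := by
  classical
  have hLpos : 0 < lamNormSq m (lam:ℂ) := BE.lamNormSq_pos m _
  set L : ℝ := lamNormSq m (lam:ℂ) with hLdef
  have hL0 : ((L:ℝ):ℂ) ≠ 0 := by simpa using hLpos.ne'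
  have hsqL : 0 < Real.sqrt L := Real.sqrt_pos.mpr hLpos
  set P : Matrix (Fin n) (Fin n) ℂ := polyEval A (lam:ℂ) with hPdef
  have hP : Pᴴ = P := BE.polyEval_conjT lam A hA
  set a : ℂ := star x ⬝ᵥ r with hadef
  have hrx : star r ⬝ᵥ x = a := by
    rw [hr, star_neg, neg_dotProduct, Matrix.star_mulVec, hP, ← dotProduct_mulVec, hadef, hr,
      dotProduct_neg]
  have ha : conj a = a := by
    have h2 : star r ⬝ᵥ x = star (star x ⬝ᵥ r) := Matrix.star_dotProduct r x
    rw [hrx, ← hadef] at h2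
    exact h2.symm
  have hVx : vecNormSq x = 1 := by
    have h := BE.dot_self x
    rw [hx] at h
    exact_mod_cast h.symm
  have hnx : vecNorm x = 1 := by rw [vecNorm, hVx, Real.sqrt_one]
  set s : Fin n → ℂ := r - a • x with hsdef
  have hrs : r = a • x + s := by rw [hsdef]; module
  have hxs : star x ⬝ᵥ s = 0 := by
    rw [hsdef, dotProduct_sub, dotProduct_smul, ← hadef, hx, smul_eq_mul, mul_one, sub_self]
  have hsx : star s ⬝ᵥ x = 0 := by
    rw [Matrix.star_dotProduct, hxs, star_zero]
  have haa : conj a * a = ((‖a‖^2 : ℝ) : ℂ) := BE.conj_mul_self a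
  have hVs : vecNormSq s = vecNormSq r - ‖a‖^2 := by
    have hstar : star s = star r - conj a • star x := by
      rw [hsdef, star_sub, star_smul]
      rfl
    have key : ((vecNormSq s : ℝ):ℂ) = ((vecNormSq r:ℝ):ℂ) - ((‖a‖^2:ℝ):ℂ) := by
      rw [← BE.dot_self s, hstar, sub_dotProduct, smul_dotProduct]
      nth_rewrite 1 [hsdef]
      rw [dotProduct_sub, dotProduct_sub, dotProduct_smul, dotProduct_smul,
        BE.dot_self r, hrx, ← hadef, hx, ← haa]
      simp only [smul_eq_mul, ha, mul_one]
      ring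
    have key2 : ((vecNormSq s : ℝ):ℂ) = ((vecNormSq r - ‖a‖^2 : ℝ):ℂ) := by
      rw [key]; push_cast; ring
    exact_mod_cast key2
  -- the minimal matrix M
  set M : Matrix (Fin n) (Fin n) ℂ :=
    vecMulVec x (star r) + vecMulVec r (star x)
      - (star r ⬝ᵥ x) • vecMulVec x (star x) with hMdef
  set X : Matrix (Fin n) (Fin n) ℂ := vecMulVec x (star x) with hXdef
  set C : Matrix (Fin n) (Fin n) ℂ := vecMulVec x (star s) with hCdef
  set C' : Matrix (Fin n) (Fin n) ℂ := vecMulVec s (star x) with hC'def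
  have hMform : M = a • X + C + C' := by
    have hstarr : star r = conj a • star x + star s := by
      rw [hrs, star_add, star_smul]
      rfl
    have h1 : vecMulVec x (star r) = a • X + C := by
      rw [hstarr, BE.vecMulVec_add_right, BE.vecMulVec_smul_right, ha, hXdef, hCdef]
    have h2 : vecMulVec r (star x) = a • X + C' := by
      nth_rewrite 1 [hrs]
      rw [BE.vecMulVec_add_left, BE.vecMulVec_smul_left, hXdef, hC'def]
    rw [hMdef, h1, h2, hrx, hXdef]
    module
  have hMx : M *ᵥ x = r := by
    rw [hMform, add_mulVec, add_mulVec, Matrix.smul_mulVec, hXdef, hCdef, hC'def,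
      BE.vecMulVec_mulVec, BE.vecMulVec_mulVec, BE.vecMulVec_mulVec, hx, hsx, hrs]
    module
  have hMs : M *ᵥ s = ((vecNormSq s:ℝ):ℂ) • x := by
    rw [hMform, add_mulVec, add_mulVec, Matrix.smul_mulVec, hXdef, hCdef, hC'def,
      BE.vecMulVec_mulVec, BE.vecMulVec_mulVec, BE.vecMulVec_mulVec, hxs, BE.dot_self s,
      zero_smul, smul_zero, zero_add, zero_smul, add_zero]
  have hMherm : Mᴴ = M := by
    rw [hMdef, Matrix.conjTranspose_sub, Matrix.conjTranspose_add, BE.vecMulVec_conjT,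
      BE.vecMulVec_conjT, Matrix.conjTranspose_smul, BE.vecMulVec_conjT, hrx]
    have : star a = a := ha
    rw [this]
    abel
  have hfM : frobNormSq M = 2 * vecNormSq r - ‖a‖^2 := by
    have hsr : star s ⬝ᵥ r = ((vecNormSq s:ℝ):ℂ) := by
      nth_rewrite 1 [hrs]
      rw [dotProduct_add, dotProduct_smul, hsx, BE.dot_self s, smul_eq_mul, mul_zero, zero_add]
    have hexp : BE.cdot M M = ((‖a‖^2:ℝ):ℂ) + 2 * ((vecNormSq s:ℝ):ℂ) := by
      nth_rewrite 1 [hMform]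
      rw [BE.cdot_add_left, BE.cdot_add_left, BE.cdot_smul_left, hXdef, hCdef, hC'def,
        BE.cdot_vmv, BE.cdot_vmv, BE.cdot_vmv, hMx, hMs, dotProduct_smul, ← hadef, hx, hsr]
      simp only [smul_eq_mul, mul_one]
      rw [haa]
      ring
    have := BE.cdot_self M
    rw [hexp] at this
    have h2 : ((frobNormSq M:ℝ):ℂ) = ((‖a‖^2 + 2*vecNormSq s : ℝ):ℂ) := by
      rw [← this]; push_cast; ring
    have h3 : frobNormSq M = ‖a‖^2 + 2*vecNormSq s := by exact_mod_cast h2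
    rw [h3, hVs]; ring
  have hfM_nonneg : 0 ≤ 2 * vecNormSq r - ‖a‖^2 := hfM ▸ BE.frobNormSq_nonneg M
  -- orthogonal decomposition against M
  have horth : ∀ Q : Matrix (Fin n) (Fin n) ℂ, Qᴴ = Q → Q *ᵥ x = r →
      frobNormSq Q = frobNormSq M + frobNormSq (Q - M) := by
    intro Q hQH hQx
    have hEH : (Q - M)ᴴ = Q - M := by rw [Matrix.conjTranspose_sub, hQH, hMherm]
    have hEx : (Q - M) *ᵥ x = 0 := by rw [sub_mulVec, hQx, hMx, sub_self]
    have hxE : star x ᵥ* (Q - M) = 0 := by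
      have h1 := Matrix.star_mulVec (M := Q - M) (v := x)
      rw [hEx, hEH, star_zero] at h1
      exact h1.symm
    have hME : BE.cdot M (Q - M) = 0 := by
      nth_rewrite 1 [hMform]
      rw [BE.cdot_add_left, BE.cdot_add_left, BE.cdot_smul_left, hXdef, hCdef, hC'def,
        BE.cdot_vmv, BE.cdot_vmv, BE.cdot_vmv, hEx, dotProduct_mulVec, hxE, zero_dotProduct,
        dotProduct_zero]
      simp
    have hEM : BE.cdot (Q - M) M = 0 := by rw [← BE.cdot_conj, hME, map_zero]
    have key : ((frobNormSq Q:ℝ):ℂ) = ((frobNormSq M + frobNormSq (Q - M) : ℝ):ℂ) := by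
      have hQME : Q = M + (Q - M) := by abel
      rw [← BE.cdot_self]
      nth_rewrite 1 [hQME]
      nth_rewrite 2 [hQME]
      rw [BE.cdot_add_left, BE.cdot_add_right, BE.cdot_add_right, hME, hEM, BE.cdot_self,
        BE.cdot_self]
      push_cast
      ring
    exact_mod_cast key
  -- feasibility conversions
  have hfeasQx : ∀ B : Fin (m+1) → Matrix (Fin n) (Fin n) ℂ,
      (P + polyEval B (lam:ℂ)) *ᵥ x = 0 → polyEval B (lam:ℂ) *ᵥ x = r := by
    intro B h
    rw [add_mulVec] at h
    have := eq_neg_of_add_eq_zero_right h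
    rw [this, ← hr]
  have hfeasOf : ∀ B : Fin (m+1) → Matrix (Fin n) (Fin n) ℂ,
      polyEval B (lam:ℂ) *ᵥ x = r → (P + polyEval B (lam:ℂ)) *ᵥ x = 0 := by
    intro B h
    rw [add_mulVec, h, hr]
    abel
  -- scaled family facts
  have hsumcsq : ∑ j : Fin (m+1), ‖((lam:ℂ)^(j:ℕ))/((L:ℝ):ℂ)‖^2 = 1/L := by
    have h1 : ∀ j : Fin (m+1), ‖((lam:ℂ)^(j:ℕ))/((L:ℝ):ℂ)‖^2 = ‖(lam:ℂ)^(j:ℕ)‖^2 * (1/L^2) := by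
      intro j
      rw [norm_div, div_pow, Complex.norm_real, Real.norm_eq_abs, abs_of_pos hLpos]
      ring
    rw [Finset.sum_congr rfl fun j _ => h1 j, ← Finset.sum_mul]
    rw [show ∑ j : Fin (m+1), ‖(lam:ℂ)^(j:ℕ)‖^2 = L from by rw [hLdef]; rfl]
    field_simp
  have hconjc : ∀ j : Fin (m+1), conj (((lam:ℂ)^(j:ℕ))/((L:ℝ):ℂ)) = ((lam:ℂ)^(j:ℕ))/((L:ℝ):ℂ) := by
    intro j
    rw [← Complex.ofReal_pow, map_div₀, Complex.conj_ofReal, Complex.conj_ofReal]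
  have hevalscaled : ∀ K : Matrix (Fin n) (Fin n) ℂ,
      polyEval (fun j : Fin (m+1) => (((lam:ℂ)^(j:ℕ))/((L:ℝ):ℂ)) • K) (lam:ℂ) = K :=
    fun K => BE.polyEval_scaled (ι := Fin n) m lam K
  have hfamF : ∀ K : Matrix (Fin n) (Fin n) ℂ,
      polyNormF (fun j : Fin (m+1) => (((lam:ℂ)^(j:ℕ))/((L:ℝ):ℂ)) • K)
        = Real.sqrt (frobNormSq K / L) := by
    intro K
    rw [polyNormF]
    have h1 : ∀ j : Fin (m+1), frobNormSq ((((lam:ℂ)^(j:ℕ))/((L:ℝ):ℂ)) • K)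
        = ‖((lam:ℂ)^(j:ℕ))/((L:ℝ):ℂ)‖^2 * frobNormSq K := fun j => BE.frobNormSq_smul _ _
    rw [Finset.sum_congr rfl fun j _ => h1 j, ← Finset.sum_mul, hsumcsq]
    congr 1
    ring
  have hfam2 : ∀ K : Matrix (Fin n) (Fin n) ℂ,
      polyNorm2 (fun j : Fin (m+1) => (((lam:ℂ)^(j:ℕ))/((L:ℝ):ℂ)) • K)
        = specNorm K / Real.sqrt L := by
    intro K
    rw [polyNorm2]
    have h1 : ∀ j : Fin (m+1), specNorm ((((lam:ℂ)^(j:ℕ))/((L:ℝ):ℂ)) • K)^2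
        = ‖((lam:ℂ)^(j:ℕ))/((L:ℝ):ℂ)‖^2 * specNorm K^2 := by
      intro j
      rw [BE.specNorm_smul]
      ring
    rw [Finset.sum_congr rfl fun j _ => h1 j, ← Finset.sum_mul, hsumcsq, one_div,
      inv_mul_eq_div, Real.sqrt_div (sq_nonneg _), Real.sqrt_sq (BE.specNorm_nonneg K)]
  -- ΔA facts
  have hΔAfun : ΔA = fun j : Fin (m+1) => (((lam:ℂ)^(j:ℕ))/((L:ℝ):ℂ)) • M := funext hΔ
  have hΔAherm : ΔA ∈ HermPoly := by
    intro j
    rw [hΔ j, Matrix.conjTranspose_smul, hMherm]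
    congr 1
    exact hconjc j
  have hevalΔA : polyEval ΔA (lam:ℂ) = M := by rw [hΔAfun]; exact hevalscaled M
  have hfeasΔA : (P + polyEval ΔA (lam:ℂ)) *ᵥ x = 0 := hfeasOf ΔA (by rw [hevalΔA, hMx])
  have hnormFΔA : polyNormF ΔA = Real.sqrt ((2 * vecNormSq r - ‖a‖^2) / L) := by
    rw [hΔAfun, hfamF M, hfM]
  -- eta F Herm
  set SFH : Set ℝ := {t | ∃ ΔB : Fin (m+1) → Matrix (Fin n) (Fin n) ℂ,
    ΔB ∈ HermPoly ∧ (polyEval A (lam:ℂ) + polyEval ΔB (lam:ℂ)) *ᵥ x = 0 ∧ t = polyNormF ΔB}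
    with hSFH
  have hetaFH_def : eta polyNormF HermPoly (lam:ℂ) x A = sInf SFH := rfl
  have hmemFH : polyNormF ΔA ∈ SFH := ⟨ΔA, hΔAherm, hfeasΔA, rfl⟩
  have hbddFH : BddBelow SFH := by
    refine ⟨0, fun t ht => ?_⟩
    obtain ⟨B, _, _, rfl⟩ := ht
    exact Real.sqrt_nonneg _
  have hlbFH : ∀ t ∈ SFH, Real.sqrt ((2 * vecNormSq r - ‖a‖^2) / L) ≤ t := by
    rintro t ⟨B, hBH, hBfeas, rfl⟩
    have hQH := BE.polyEval_conjT lam B hBH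
    have hQx := hfeasQx B hBfeas
    have hdec := BE.sum_frob_decomp m lam B
    have hfQ := horth _ hQH hQx
    have h1 : (2 * vecNormSq r - ‖a‖^2) / L ≤ ∑ j, frobNormSq (B j) := by
      rw [hdec, hfQ]
      have h2 : 0 ≤ frobNormSq (polyEval B (lam:ℂ) - M) := BE.frobNormSq_nonneg _
      have h3 : 0 ≤ ∑ j : Fin (m+1), frobNormSq
          (B j - (((lam:ℂ) ^ (j:ℕ)) / ((L:ℝ):ℂ)) • polyEval B (lam:ℂ)) :=
        Finset.sum_nonneg fun j _ => BE.frobNormSq_nonneg _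
      rw [← hfM]
      calc frobNormSq M / L ≤ (frobNormSq M + frobNormSq (polyEval B (lam:ℂ) - M)) / L :=
            (div_le_div_iff_of_pos_right hLpos).mpr (le_add_of_nonneg_right h2)
        _ ≤ _ := le_add_of_nonneg_right h3
    exact Real.sqrt_le_sqrt h1
  have hetaFH : eta polyNormF HermPoly (lam:ℂ) x A = Real.sqrt ((2 * vecNormSq r - ‖a‖^2) / L) := by
    rw [hetaFH_def]
    exact le_antisymm ((csInf_le hbddFH hmemFH).trans_eq hnormFΔA)
      (le_csInf ⟨_, hmemFH⟩ hlbFH)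
  -- eta F univ lower bound
  set SFU : Set ℝ := {t | ∃ ΔB : Fin (m+1) → Matrix (Fin n) (Fin n) ℂ,
    ΔB ∈ (Set.univ : Set (Fin (m+1) → Matrix (Fin n) (Fin n) ℂ)) ∧
    (polyEval A (lam:ℂ) + polyEval ΔB (lam:ℂ)) *ᵥ x = 0 ∧ t = polyNormF ΔB} with hSFU
  have hetaFU_def : eta polyNormF Set.univ (lam:ℂ) x A = sInf SFU := rfl
  have hVr_nonneg : 0 ≤ vecNormSq r := BE.vecNormSq_nonneg r
  have hlbFU : ∀ t ∈ SFU, vecNorm r / Real.sqrt L ≤ t := by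
    rintro t ⟨B, -, hBfeas, rfl⟩
    have hQx := hfeasQx B hBfeas
    have hdec := BE.sum_frob_decomp m lam B
    have hQl : vecNormSq r ≤ frobNormSq (polyEval B (lam:ℂ)) := by
      have h := BE.mulVec_vecNormSq_le (polyEval B (lam:ℂ)) x
      rw [hQx, hVx, mul_one] at h
      exact h
    have h1 : vecNormSq r / L ≤ ∑ j, frobNormSq (B j) := by
      rw [hdec]
      have h3 : 0 ≤ ∑ j : Fin (m+1), frobNormSq
          (B j - (((lam:ℂ) ^ (j:ℕ)) / ((L:ℝ):ℂ)) • polyEval B (lam:ℂ)) :=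
        Finset.sum_nonneg fun j _ => BE.frobNormSq_nonneg _
      calc vecNormSq r / L ≤ frobNormSq (polyEval B (lam:ℂ)) / L :=
            (div_le_div_iff_of_pos_right hLpos).mpr hQl
        _ ≤ _ := le_add_of_nonneg_right h3
    have h2 := Real.sqrt_le_sqrt h1
    rw [Real.sqrt_div hVr_nonneg] at h2
    exact h2
  have hetaFU_lb : vecNorm r / Real.sqrt L ≤ eta polyNormF Set.univ (lam:ℂ) x A := by
    rw [hetaFU_def]
    exact le_csInf ⟨polyNormF ΔA, ΔA, Set.mem_univ _, hfeasΔA, rfl⟩ hlbFU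
  have hgoal2 : eta polyNormF HermPoly (lam:ℂ) x A
      ≤ Real.sqrt 2 * eta polyNormF Set.univ (lam:ℂ) x A := by
    rw [hetaFH]
    have e1 : Real.sqrt ((2 * vecNormSq r)/L) = Real.sqrt 2 * (vecNorm r / Real.sqrt L) := by
      rw [Real.sqrt_div (mul_nonneg (by norm_num) hVr_nonneg),
        Real.sqrt_mul (by norm_num : (0:ℝ) ≤ 2) (vecNormSq r), vecNorm]
      ring
    have h1 : Real.sqrt ((2*vecNormSq r - ‖a‖^2)/L) ≤ Real.sqrt 2 * (vecNorm r / Real.sqrt L) := by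
      rw [← e1]
      apply Real.sqrt_le_sqrt
      apply (div_le_div_iff_of_pos_right hLpos).mpr
      nlinarith [sq_nonneg ‖a‖]
    calc _ ≤ Real.sqrt 2 * (vecNorm r / Real.sqrt L) := h1
      _ ≤ Real.sqrt 2 * eta polyNormF Set.univ (lam:ℂ) x A :=
          mul_le_mul_of_nonneg_left hetaFU_lb (Real.sqrt_nonneg 2)
  -- spectral norm lower bound
  have hlb2 : ∀ (B : Fin (m+1) → Matrix (Fin n) (Fin n) ℂ),
      (polyEval A (lam:ℂ) + polyEval B (lam:ℂ)) *ᵥ x = 0 →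
      vecNorm r / Real.sqrt L ≤ polyNorm2 B := by
    intro B hBfeas
    have hQx := hfeasQx B hBfeas
    have h1 : vecNorm r ≤ specNorm (polyEval B (lam:ℂ)) := by
      have h := BE.specNorm_mulVec_le (polyEval B (lam:ℂ)) x
      rw [hQx, hnx, mul_one] at h
      exact h
    have h2 : specNorm (polyEval B (lam:ℂ)) ≤ Real.sqrt L * polyNorm2 B := by
      refine (BE.specNorm_polyEval_le B _).trans ?_
      have h3 := Real.sum_mul_le_sqrt_mul_sqrt (Finset.univ : Finset (Fin (m+1)))
        (fun j => ‖(lam:ℂ)^(j:ℕ)‖) (fun j => specNorm (B j))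
      rw [polyNorm2]
      rw [show ∑ j : Fin (m+1), ‖(lam:ℂ)^(j:ℕ)‖^2 = L from by rw [hLdef]; rfl] at h3
      exact h3
    rw [div_le_iff₀ hsqL]
    calc vecNorm r ≤ Real.sqrt L * polyNorm2 B := h1.trans h2
      _ = polyNorm2 B * Real.sqrt L := mul_comm _ _
  -- eta 2 univ
  set S2U : Set ℝ := {t | ∃ ΔB : Fin (m+1) → Matrix (Fin n) (Fin n) ℂ,
    ΔB ∈ (Set.univ : Set (Fin (m+1) → Matrix (Fin n) (Fin n) ℂ)) ∧
    (polyEval A (lam:ℂ) + polyEval ΔB (lam:ℂ)) *ᵥ x = 0 ∧ t = polyNorm2 ΔB} with hS2U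
  set S2H : Set ℝ := {t | ∃ ΔB : Fin (m+1) → Matrix (Fin n) (Fin n) ℂ,
    ΔB ∈ HermPoly ∧
    (polyEval A (lam:ℂ) + polyEval ΔB (lam:ℂ)) *ᵥ x = 0 ∧ t = polyNorm2 ΔB} with hS2H
  have hCx : vecMulVec r (star x) *ᵥ x = r := by
    rw [BE.vecMulVec_mulVec, hx, one_smul]
  have hspecC : specNorm (vecMulVec r (star x)) ≤ vecNorm r := by
    refine BE.specNorm_le_bound _ (BE.vecNorm_nonneg r) fun v => ?_
    rw [BE.vecMulVec_mulVec, BE.vecNorm_smul]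
    calc ‖star x ⬝ᵥ v‖ * vecNorm r ≤ (vecNorm x * vecNorm v) * vecNorm r :=
          mul_le_mul_of_nonneg_right (BE.dot_norm_le x v) (BE.vecNorm_nonneg r)
      _ = vecNorm r * vecNorm v := by rw [hnx]; ring
  have hfeasΔC : (P + polyEval (fun j : Fin (m+1) =>
      (((lam:ℂ)^(j:ℕ))/((L:ℝ):ℂ)) • vecMulVec r (star x)) (lam:ℂ)) *ᵥ x = 0 :=
    hfeasOf _ (by rw [hevalscaled, hCx])
  have heta2U : eta polyNorm2 Set.univ (lam:ℂ) x A = vecNorm r / Real.sqrt L := by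
    have hdef : eta polyNorm2 Set.univ (lam:ℂ) x A = sInf S2U := rfl
    have hmem : polyNorm2 (fun j : Fin (m+1) =>
        (((lam:ℂ)^(j:ℕ))/((L:ℝ):ℂ)) • vecMulVec r (star x)) ∈ S2U :=
      ⟨_, Set.mem_univ _, hfeasΔC, rfl⟩
    have hbdd : BddBelow S2U := ⟨0, by rintro t ⟨B, -, -, rfl⟩; exact Real.sqrt_nonneg _⟩
    rw [hdef]
    refine le_antisymm ((csInf_le hbdd hmem).trans ?_) (le_csInf ⟨_, hmem⟩ ?_)
    · rw [hfam2]
      exact (div_le_div_iff_of_pos_right hsqL).mpr hspecC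
    · rintro t ⟨B, -, hBfeas, rfl⟩
      exact hlb2 B hBfeas
  -- construction of the minimal spectral Hermitian perturbation
  set σ : ℝ := vecNorm s with hσdef
  have hσnn : 0 ≤ σ := BE.vecNorm_nonneg s
  have hσsq : σ^2 = vecNormSq s := Real.sq_sqrt (BE.vecNormSq_nonneg s)
  set u : Fin n → ℂ := ((σ:ℝ):ℂ)⁻¹ • s with hudef
  have hsu : s = ((σ:ℝ):ℂ) • u := by
    by_cases h0 : s = 0
    · rw [hudef, h0]
      simp
    · have hσ0 : σ ≠ 0 := by
        intro h
        apply h0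
        apply BE.vecNormSq_eq_zero
        nlinarith [hσsq]
      rw [hudef, smul_inv_smul₀ (by exact_mod_cast hσ0)]
  have hxu : star x ⬝ᵥ u = 0 := by
    rw [hudef, dotProduct_smul, hxs, smul_zero]
  have hux : star u ⬝ᵥ x = 0 := by
    rw [Matrix.star_dotProduct, hxu, star_zero]
  have hVu : vecNormSq u ≤ 1 := by
    rw [hudef, BE.vecNormSq_smul]
    by_cases h0 : σ = 0
    · simp [h0]
    · rw [norm_inv, Complex.norm_real, Real.norm_eq_abs, abs_of_nonneg hσnn, inv_pow, ← hσsq]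
      rw [inv_mul_cancel₀ (by positivity)]
  have hσc : conj ((σ:ℝ):ℂ) = ((σ:ℝ):ℂ) := Complex.conj_ofReal σ
  have hsv : ∀ v, star s ⬝ᵥ v = ((σ:ℝ):ℂ) * (star u ⬝ᵥ v) := by
    intro v
    nth_rewrite 1 [hsu]
    rw [star_smul, smul_dotProduct, smul_eq_mul,
      show star (((σ:ℝ)):ℂ) = ((σ:ℝ):ℂ) from hσc]
  set U : Matrix (Fin n) (Fin n) ℂ := vecMulVec u (star u) with hUdef
  set H : Matrix (Fin n) (Fin n) ℂ := M - a • U with hHdef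
  have hHherm : Hᴴ = H := by
    rw [hHdef, Matrix.conjTranspose_sub, hMherm, Matrix.conjTranspose_smul, hUdef,
      BE.vecMulVec_conjT]
    have h1 : star a = a := ha
    rw [h1]
  have hHx : H *ᵥ x = r := by
    rw [hHdef, sub_mulVec, hMx, Matrix.smul_mulVec, hUdef, BE.vecMulVec_mulVec, hux,
      zero_smul, smul_zero, sub_zero]
  have hHv : ∀ v, vecNorm (H *ᵥ v) ≤ vecNorm r * vecNorm v := by
    intro v
    set cc : ℂ := star x ⬝ᵥ v with hccdef
    set dd : ℂ := star u ⬝ᵥ v with hdddef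
    have hMv : M *ᵥ v = (a * cc) • x + (((σ:ℝ):ℂ) * dd) • x + (((σ:ℝ):ℂ) * cc) • u := by
      rw [hMform, add_mulVec, add_mulVec, Matrix.smul_mulVec, hXdef, hCdef, hC'def,
        BE.vecMulVec_mulVec, BE.vecMulVec_mulVec, BE.vecMulVec_mulVec, ← hccdef, hsv v,
        ← hdddef]
      nth_rewrite 1 [hsu]
      module
    have hHvform : H *ᵥ v = (a*cc + ((σ:ℝ):ℂ)*dd) • x + (((σ:ℝ):ℂ)*cc - a*dd) • u := by
      rw [hHdef, sub_mulVec, hMv, Matrix.smul_mulVec, hUdef, BE.vecMulVec_mulVec,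
        ← hdddef]
      module
    have hVsq : vecNormSq (H *ᵥ v)
        = ‖a*cc + ((σ:ℝ):ℂ)*dd‖^2 + ‖((σ:ℝ):ℂ)*cc - a*dd‖^2 * vecNormSq u := by
      rw [hHvform]
      exact BE.vecNormSq_combo x u hx hxu _ _
    have hrot : ‖a*cc + ((σ:ℝ):ℂ)*dd‖^2 + ‖((σ:ℝ):ℂ)*cc - a*dd‖^2
        = (‖a‖^2 + ‖((σ:ℝ):ℂ)‖^2) * (‖cc‖^2 + ‖dd‖^2) :=
      BE.rot_identity a ((σ:ℝ):ℂ) cc dd ha hσc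
    have hbes : ‖cc‖^2 + ‖dd‖^2 ≤ vecNormSq v := by
      rw [hccdef, hdddef]
      exact BE.bessel x u v hx hxu hVu
    have hnσ : ‖((σ:ℝ):ℂ)‖^2 = vecNormSq s := by
      rw [Complex.norm_real, Real.norm_eq_abs, sq_abs, hσsq]
    have hsum : ‖a‖^2 + ‖((σ:ℝ):ℂ)‖^2 = vecNormSq r := by rw [hnσ, hVs]; ring
    have hfinal : vecNormSq (H *ᵥ v) ≤ vecNormSq r * vecNormSq v := by
      have h5 : vecNormSq (H *ᵥ v) ≤ ‖a*cc + ((σ:ℝ):ℂ)*dd‖^2 + ‖((σ:ℝ):ℂ)*cc - a*dd‖^2 := by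
        rw [hVsq]
        nlinarith [sq_nonneg ‖((σ:ℝ):ℂ)*cc - a*dd‖]
      calc vecNormSq (H *ᵥ v) ≤ _ := h5
        _ = (‖a‖^2 + ‖((σ:ℝ):ℂ)‖^2) * (‖cc‖^2 + ‖dd‖^2) := hrot
        _ = vecNormSq r * (‖cc‖^2 + ‖dd‖^2) := by rw [hsum]
        _ ≤ vecNormSq r * vecNormSq v := mul_le_mul_of_nonneg_left hbes hVr_nonneg
    have h6 := Real.sqrt_le_sqrt hfinal
    rw [Real.sqrt_mul hVr_nonneg] at h6
    exact h6
  have hspecH : specNorm H ≤ vecNorm r := BE.specNorm_le_bound H (BE.vecNorm_nonneg r) hHv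
  have hHermΔH : (fun j : Fin (m+1) => (((lam:ℂ)^(j:ℕ))/((L:ℝ):ℂ)) • H) ∈ HermPoly := by
    intro j
    show ((((lam:ℂ)^(j:ℕ))/((L:ℝ):ℂ)) • H)ᴴ = _
    rw [Matrix.conjTranspose_smul, hHherm]
    congr 1
    exact hconjc j
  have hfeasΔH : (P + polyEval (fun j : Fin (m+1) =>
      (((lam:ℂ)^(j:ℕ))/((L:ℝ):ℂ)) • H) (lam:ℂ)) *ᵥ x = 0 :=
    hfeasOf _ (by rw [hevalscaled, hHx])
  have heta2H : eta polyNorm2 HermPoly (lam:ℂ) x A = vecNorm r / Real.sqrt L := by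
    have hdef : eta polyNorm2 HermPoly (lam:ℂ) x A = sInf S2H := rfl
    have hmem : polyNorm2 (fun j : Fin (m+1) => (((lam:ℂ)^(j:ℕ))/((L:ℝ):ℂ)) • H) ∈ S2H :=
      ⟨_, hHermΔH, hfeasΔH, rfl⟩
    have hbdd : BddBelow S2H := ⟨0, by rintro t ⟨B, -, -, rfl⟩; exact Real.sqrt_nonneg _⟩
    rw [hdef]
    refine le_antisymm ((csInf_le hbdd hmem).trans ?_) (le_csInf ⟨_, hmem⟩ ?_)
    · rw [hfam2]
      exact (div_le_div_iff_of_pos_right hsqL).mpr hspecH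
    · rintro t ⟨B, -, hBfeas, rfl⟩
      exact hlb2 B hBfeas
  -- uniqueness
  have huniq : ∀ ΔB ∈ HermPoly, (P + polyEval ΔB (lam:ℂ)) *ᵥ x = 0 →
      polyNormF ΔB = eta polyNormF HermPoly (lam:ℂ) x A → ΔB = ΔA := by
    intro B hBH hBfeas hBnorm
    have hQH := BE.polyEval_conjT lam B hBH
    have hQx := hfeasQx B hBfeas
    have hfQ := horth _ hQH hQx
    have hdec := BE.sum_frob_decomp m lam B
    have hsum_eq : ∑ j, frobNormSq (B j) = (2 * vecNormSq r - ‖a‖^2) / L := by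
      have h1 : Real.sqrt (∑ j, frobNormSq (B j)) = Real.sqrt ((2 * vecNormSq r - ‖a‖^2)/L) := by
        rw [← hetaFH, ← hBnorm]
        rfl
      exact (Real.sqrt_inj (Finset.sum_nonneg fun j _ => BE.frobNormSq_nonneg _)
        (div_nonneg hfM_nonneg hLpos.le)).mp h1
    have h1 : 0 ≤ frobNormSq (polyEval B (lam:ℂ) - M) / L :=
      div_nonneg (BE.frobNormSq_nonneg _) hLpos.le
    have h2 : 0 ≤ ∑ j : Fin (m+1), frobNormSq
        (B j - (((lam:ℂ)^(j:ℕ))/((L:ℝ):ℂ)) • polyEval B (lam:ℂ)) :=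
      Finset.sum_nonneg fun j _ => BE.frobNormSq_nonneg _
    have hEsum0 : frobNormSq (polyEval B (lam:ℂ) - M) / L
        + ∑ j : Fin (m+1), frobNormSq
            (B j - (((lam:ℂ)^(j:ℕ))/((L:ℝ):ℂ)) • polyEval B (lam:ℂ)) = 0 := by
      have h3 := hdec
      rw [hsum_eq, hfQ, ← hfM, add_div] at h3
      linarith
    have hD0 : frobNormSq (polyEval B (lam:ℂ) - M) = 0 := by
      have h3 : frobNormSq (polyEval B (lam:ℂ) - M)/L = 0 := by linarith
      rcases div_eq_zero_iff.mp h3 with h | h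
      · exact h
      · exact absurd h hLpos.ne'
    have hQM : polyEval B (lam:ℂ) = M :=
      sub_eq_zero.mp (BE.frobNormSq_eq_zero hD0)
    have hE0 : ∀ j : Fin (m+1), frobNormSq
        (B j - (((lam:ℂ)^(j:ℕ))/((L:ℝ):ℂ)) • polyEval B (lam:ℂ)) = 0 := by
      have h3 : ∑ j : Fin (m+1), frobNormSq
          (B j - (((lam:ℂ)^(j:ℕ))/((L:ℝ):ℂ)) • polyEval B (lam:ℂ)) = 0 := by linarith
      intro j
      exact (Finset.sum_eq_zero_iff_of_nonneg fun j _ => BE.frobNormSq_nonneg _).mp h3 j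
        (Finset.mem_univ j)
    funext j
    have h5 : B j = (((lam:ℂ)^(j:ℕ))/((L:ℝ):ℂ)) • polyEval B (lam:ℂ) :=
      sub_eq_zero.mp (BE.frobNormSq_eq_zero (hE0 j))
    rw [h5, hQM, ← hΔ j]
  -- assemble
  refine ⟨?_, hgoal2, heta2H.trans heta2U.symm, heta2U, hΔAherm, hfeasΔA,
    hnormFΔA.trans hetaFH.symm, huniq⟩
  rw [hetaFH, Real.sqrt_div hfM_nonneg]

/-- Structured backward errors of an approximate eigenpair of a Hermitian
matrix polynomial at a real point `λ`: explicit Frobenius formula bounded by `√2·η`, the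
spectral structured backward error equals the unstructured one `‖r‖₂/‖Λ_m‖₂`, and the
unique minimal Hermitian perturbation for the Frobenius norm. -/
theorem hermitian_backward_error_real {n m : ℕ}
    (A : Fin (m+1) → Matrix (Fin n) (Fin n) ℂ)
    (hA : A ∈ HermPoly) (hreg : Regular A)
    (lam : ℝ) (x : Fin n → ℂ) (hx : star x ⬝ᵥ x = 1)
    (r : Fin n → ℂ) (hr : r = -(polyEval A (lam : ℂ) *ᵥ x))
    (ΔA : Fin (m+1) → Matrix (Fin n) (Fin n) ℂ)
    (hΔ : ∀ j : Fin (m+1),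
      ΔA j = (((lam : ℂ) ^ (j : ℕ)) / (lamNormSq m (lam : ℂ) : ℂ)) •
        (vecMulVec x (star r) + vecMulVec r (star x)
          - (star r ⬝ᵥ x) • vecMulVec x (star x))) :
    eta polyNormF HermPoly (lam : ℂ) x A
      = Real.sqrt (2 * vecNormSq r - ‖star x ⬝ᵥ r‖ ^ 2)
          / Real.sqrt (lamNormSq m (lam : ℂ)) ∧
    eta polyNormF HermPoly (lam : ℂ) x A
      ≤ Real.sqrt 2 * eta polyNormF Set.univ (lam : ℂ) x A ∧
    eta polyNorm2 HermPoly (lam : ℂ) x A = eta polyNorm2 Set.univ (lam : ℂ) x A ∧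
    eta polyNorm2 Set.univ (lam : ℂ) x A = vecNorm r / Real.sqrt (lamNormSq m (lam : ℂ)) ∧
    ΔA ∈ HermPoly ∧
    (polyEval A (lam : ℂ) + polyEval ΔA (lam : ℂ)) *ᵥ x = 0 ∧
    polyNormF ΔA = eta polyNormF HermPoly (lam : ℂ) x A ∧
    (∀ ΔB ∈ HermPoly, (polyEval A (lam : ℂ) + polyEval ΔB (lam : ℂ)) *ᵥ x = 0 →
      polyNormF ΔB = eta polyNormF HermPoly (lam : ℂ) x A → ΔB = ΔA) := by
  exact main A hA lam x hx r hr ΔA hΔ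
end
end

section
/- Let P ∈ P_m(ℂ^{n×n}) be a regular skew-symmetric matrix polynomial of degree m ≥ 1, and let L(z) = zX + Y with X, Y ∈ ℂ^{mn×mn} skew-symmetric be a pencil in 𝕃₁(P) with right ansatz vector v ∈ ℂ^m, ‖v‖₂ = 1. Let S_P denote the skew-symmetric polynomials in P_m(ℂ^{n×n}) and S_L the skew-symmetric pencils of size mn. Then for every λ ∈ ℂ and x ∈ ℂⁿ with x^H x = 1 and for M ∈ {F, 2}: sqrt((m+1)/(2m)) · η_M^{S_P}(λ, x, P) ≤ η_M^{S_L}(λ, Λ_{m−1}⊗x, L) ≤ η_M^{S_P}(λ, x, P); indeed η_M^{S_L}(λ, Λ_{m−1}⊗x, L)/η_M^{S_P}(λ, x, P) = η(λ, Λ_{m−1}⊗x, L)/η(λ, x, P) whenever these ratios are defined. -/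
open scoped ComplexConjugate
open Matrix

noncomputable section

variable {ι : Type*} [Fintype ι] [DecidableEq ι]

/-- The Kronecker product of two vectors. -/
def kronVec {m' n : ℕ} (v : Fin m' → ℂ) (x : Fin n → ℂ) : Fin m' × Fin n → ℂ :=
  fun p => v p.1 * x p.2

/-- `Λ_{m−1}(z) = (z^{m−1}, …, z, 1)ᵀ`. -/
def lamVec (m : ℕ) (z : ℂ) : Fin m → ℂ := fun i => z ^ (m - 1 - (i : ℕ))

/-- The pencil `L(z) = zX + Y`, encoded by its coefficient list `B` with `B 0 = Y`,
`B 1 = X`, lies in `𝕃₁(P)` with right ansatz vector `v`: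
`L(z)·(Λ_{m−1} ⊗ I_n) = v ⊗ P(z)` for all `z` (stated via the action on vectors). -/
def InL1 {n m : ℕ} (A : Fin (m+1) → Matrix (Fin n) (Fin n) ℂ)
    (B : Fin (1+1) → Matrix (Fin m × Fin n) (Fin m × Fin n) ℂ) (v : Fin m → ℂ) : Prop :=
  ∀ (z : ℂ) (u : Fin n → ℂ),
    polyEval B z *ᵥ kronVec (lamVec m z) u = kronVec v (polyEval A z *ᵥ u)

/-- The class of skew-symmetric matrix polynomials (for `m = 1`: skew-symmetric pencils). -/
def SkewSymPoly {ι : Type*} [Fintype ι] [DecidableEq ι] {m : ℕ} :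
    Set (Fin (m+1) → Matrix ι ι ℂ) := {B | ∀ j, (B j)ᵀ = -(B j)}

set_option linter.unusedSectionVars false
set_option maxHeartbeats 1000000
namespace SkewAux


noncomputable def toE : (ι → ℂ) ≃ₗ[ℂ] EuclideanSpace ℂ ι := (WithLp.linearEquiv 2 ℂ (ι → ℂ)).symm

lemma toE_apply (u : ι → ℂ) (i : ι) : toE u i = u i := rfl

lemma norm_toE (u : ι → ℂ) : ‖toE u‖ = vecNorm u := by
  rw [EuclideanSpace.norm_eq, vecNorm, vecNormSq]
  rfl

lemma inner_toE (u v : ι → ℂ) : inner ℂ (toE u) (toE v) = star u ⬝ᵥ v := by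
  rw [PiLp.inner_apply]
  simp only [dotProduct, Pi.star_apply, toE_apply, RCLike.inner_apply, Complex.star_def]
  exact Finset.sum_congr rfl fun i _ => mul_comm _ _

lemma vecNormSq_nonneg (u : ι → ℂ) : 0 ≤ vecNormSq u :=
  Finset.sum_nonneg fun _ _ => by positivity

lemma vecNorm_nonneg (u : ι → ℂ) : 0 ≤ vecNorm u := Real.sqrt_nonneg _

lemma vecNorm_sq (u : ι → ℂ) : vecNorm u ^ 2 = vecNormSq u :=
  Real.sq_sqrt (vecNormSq_nonneg u)

lemma vecNormSq_pos (u : ι → ℂ) (hu : u ≠ 0) : 0 < vecNormSq u := by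
  rcases (vecNormSq_nonneg u).lt_or_eq with h | h
  · exact h
  · exfalso; apply hu
    have h0 : ∀ i ∈ Finset.univ, ‖u i‖ ^ 2 = 0 := by
      rw [← Finset.sum_eq_zero_iff_of_nonneg (fun i _ => by positivity)]
      exact h.symm
    funext i
    have := h0 i (Finset.mem_univ i)
    simpa using this

lemma vecNorm_pos (u : ι → ℂ) (hu : u ≠ 0) : 0 < vecNorm u :=
  Real.sqrt_pos.mpr (vecNormSq_pos u hu)

lemma vecNormSq_smul (c : ℂ) (u : ι → ℂ) : vecNormSq (c • u) = ‖c‖ ^ 2 * vecNormSq u := by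
  simp [vecNormSq, Finset.mul_sum, mul_pow, norm_mul]

lemma vecNorm_smul (c : ℂ) (u : ι → ℂ) : vecNorm (c • u) = ‖c‖ * vecNorm u := by
  rw [vecNorm, vecNormSq_smul, Real.sqrt_mul (by positivity), Real.sqrt_sq (norm_nonneg c), vecNorm]

lemma star_dot_self (u : ι → ℂ) : star u ⬝ᵥ u = ((vecNormSq u : ℝ) : ℂ) := by
  simp only [dotProduct, vecNormSq, Pi.star_apply]
  push_cast
  congr 1
  funext i
  rw [Complex.star_def, ← Complex.normSq_eq_conj_mul_self, Complex.normSq_eq_norm_sq]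
  push_cast
  ring



lemma mul_conj_norm (z : ℂ) : z * conj z = ((‖z‖ ^ 2 : ℝ) : ℂ) := by
  rw [Complex.mul_conj, Complex.normSq_eq_norm_sq]

lemma conj_mul_norm (z : ℂ) : conj z * z = ((‖z‖ ^ 2 : ℝ) : ℂ) := by
  rw [mul_comm]; exact mul_conj_norm z

lemma sum_mulVec' {α : Type*} (s : Finset α) (f : α → Matrix ι ι ℂ) (u : ι → ℂ) :
    (∑ a ∈ s, f a) *ᵥ u = ∑ a ∈ s, f a *ᵥ u := by
  funext i
  simp only [Matrix.mulVec, dotProduct, Finset.sum_apply, Matrix.sum_apply,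
    Finset.sum_mul]
  rw [Finset.sum_comm]

lemma polyEval_mulVec {m : ℕ} (A : Fin (m+1) → Matrix ι ι ℂ) (z : ℂ) (u : ι → ℂ) :
    polyEval A z *ᵥ u = ∑ j : Fin (m+1), z ^ (j : ℕ) • (A j *ᵥ u) := by
  rw [polyEval, sum_mulVec']
  congr 1; funext j
  rw [Matrix.smul_mulVec]

lemma transpose_polyEval {m : ℕ} (A : Fin (m+1) → Matrix ι ι ℂ)
    (h : ∀ j, (A j)ᵀ = -(A j)) (z : ℂ) : (polyEval A z)ᵀ = -(polyEval A z) := by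
  rw [polyEval, Matrix.transpose_sum]
  rw [← Finset.sum_neg_distrib]
  congr 1; funext j
  rw [Matrix.transpose_smul, h j, smul_neg]

lemma dot_mulVec_self_eq_zero (M : Matrix ι ι ℂ) (hM : Mᵀ = -M) (u : ι → ℂ) :
    u ⬝ᵥ (M *ᵥ u) = 0 := by
  have h1 : (Mᵀ *ᵥ u) ⬝ᵥ u = u ⬝ᵥ (M *ᵥ u) := by
    rw [Matrix.mulVec_transpose, ← Matrix.dotProduct_mulVec]
  rw [hM, Matrix.neg_mulVec, neg_dotProduct] at h1
  have : u ⬝ᵥ (M *ᵥ u) = (M *ᵥ u) ⬝ᵥ u := dotProduct_comm _ _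
  rw [this] at h1 ⊢
  linear_combination -h1 / 2


lemma sum_conj_mul_self (x : ι → ℂ) :
    (∑ k, conj (x k) * x k) = ((vecNormSq x : ℝ) : ℂ) := by
  have h : (∑ k, conj (x k) * x k) = ∑ k, ((‖x k‖ ^ 2 : ℝ) : ℂ) :=
    Finset.sum_congr rfl fun k _ => conj_mul_norm _
  rw [h, vecNormSq]
  push_cast
  ring

lemma sum_mul_conj_self (x : ι → ℂ) :
    (∑ k, x k * conj (x k)) = ((vecNormSq x : ℝ) : ℂ) := by
  have h : (∑ k, x k * conj (x k)) = ∑ k, ((‖x k‖ ^ 2 : ℝ) : ℂ) :=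
    Finset.sum_congr rfl fun k _ => mul_conj_norm _
  rw [h, vecNormSq]
  push_cast
  ring

lemma vecNormSq_star (b : ι → ℂ) : vecNormSq (star b) = vecNormSq b := by
  simp [vecNormSq]

def skewMap (x b : ι → ℂ) : Matrix ι ι ℂ :=
  Matrix.of fun i k => b i * conj (x k) - conj (x i) * b k

def rankOne (b x : ι → ℂ) : Matrix ι ι ℂ := Matrix.of fun i k => b i * conj (x k)

lemma skewMap_transpose (x b : ι → ℂ) : (skewMap x b)ᵀ = -(skewMap x b) := by
  ext i k
  simp only [skewMap, Matrix.transpose_apply, Matrix.neg_apply, Matrix.of_apply]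
  ring

lemma mulVec_eq_sum (M : Matrix ι ι ℂ) (u : ι → ℂ) (i : ι) :
    (M *ᵥ u) i = ∑ k, M i k * u k := rfl

lemma skewMap_mulVec_eq (x b u : ι → ℂ) :
    skewMap x b *ᵥ u = (star x ⬝ᵥ u) • b - (b ⬝ᵥ u) • star x := by
  funext i
  have h : ∀ k, (b i * conj (x k) - conj (x i) * b k) * u k
      = b i * (conj (x k) * u k) - conj (x i) * (b k * u k) := fun k => by ring
  simp only [mulVec_eq_sum, skewMap, Matrix.of_apply, h, Finset.sum_sub_distrib,
    ← Finset.mul_sum, Pi.sub_apply, Pi.smul_apply, Pi.star_apply, smul_eq_mul,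
    dotProduct, Complex.star_def]
  ring

lemma rankOne_mulVec_eq (b x u : ι → ℂ) :
    rankOne b x *ᵥ u = (star x ⬝ᵥ u) • b := by
  funext i
  have h : ∀ k, b i * conj (x k) * u k = b i * (conj (x k) * u k) := fun k => by ring
  simp only [mulVec_eq_sum, rankOne, Matrix.of_apply, h, ← Finset.mul_sum,
    Pi.smul_apply, smul_eq_mul, dotProduct, Pi.star_apply, Complex.star_def]
  ring

lemma star_dot_eq_sum (x u : ι → ℂ) : star x ⬝ᵥ u = ∑ k, conj (x k) * u k := by
  simp [dotProduct, Complex.star_def]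

lemma skewMap_mulVec_self (x b : ι → ℂ) (hxb : x ⬝ᵥ b = 0) :
    skewMap x b *ᵥ x = ((vecNormSq x : ℝ) : ℂ) • b := by
  rw [skewMap_mulVec_eq]
  have h1 : star x ⬝ᵥ x = ((vecNormSq x : ℝ) : ℂ) := by
    rw [star_dot_eq_sum]; exact sum_conj_mul_self x
  have h2 : b ⬝ᵥ x = 0 := by rw [dotProduct_comm]; exact hxb
  rw [h1, h2, zero_smul, sub_zero]

lemma rankOne_mulVec_self (b x : ι → ℂ) :
    rankOne b x *ᵥ x = ((vecNormSq x : ℝ) : ℂ) • b := by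
  rw [rankOne_mulVec_eq]
  have h1 : star x ⬝ᵥ x = ((vecNormSq x : ℝ) : ℂ) := by
    rw [star_dot_eq_sum]; exact sum_conj_mul_self x
  rw [h1]

lemma frobNormSq_eq_re (M : Matrix ι ι ℂ) :
    frobNormSq M = (∑ i, ∑ k, M i k * conj (M i k)).re := by
  rw [frobNormSq, Complex.re_sum]
  refine Finset.sum_congr rfl fun i _ => ?_
  rw [Complex.re_sum]
  refine Finset.sum_congr rfl fun k _ => ?_
  rw [mul_conj_norm]
  exact (Complex.ofReal_re _).symm

lemma frobNormSq_nonneg (M : Matrix ι ι ℂ) : 0 ≤ frobNormSq M := by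
  rw [frobNormSq]
  positivity

lemma frobNormSq_smul (c : ℂ) (M : Matrix ι ι ℂ) :
    frobNormSq (c • M) = ‖c‖ ^ 2 * frobNormSq M := by
  simp only [frobNormSq, Matrix.smul_apply, smul_eq_mul, norm_mul, mul_pow, Finset.mul_sum]

lemma frobNormSq_rankOne (b x : ι → ℂ) :
    frobNormSq (rankOne b x) = vecNormSq b * vecNormSq x := by
  simp only [frobNormSq, rankOne, Matrix.of_apply, norm_mul, mul_pow, vecNormSq,
    RCLike.norm_conj]
  rw [← Finset.sum_mul_sum]

lemma frobNormSq_skewMap (x b : ι → ℂ) (hxb : x ⬝ᵥ b = 0) :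
    frobNormSq (skewMap x b) = 2 * (vecNormSq x * vecNormSq b) := by
  rw [frobNormSq_eq_re]
  have expand : ∀ i k : ι, skewMap x b i k * conj (skewMap x b i k)
      = (b i * conj (b i)) * (conj (x k) * x k) + (conj (x i) * x i) * (b k * conj (b k))
        - (b i * x i) * (conj (x k) * conj (b k)) - (conj (b i) * conj (x i)) * (x k * b k) := by
    intro i k
    simp only [skewMap, Matrix.of_apply, _root_.map_sub, _root_.map_mul, Complex.conj_conj]
    ring
  have hxb' : (∑ i, x i * b i) = 0 := hxb
  have hxb'' : (∑ k, conj (x k) * conj (b k)) = 0 := by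
    have h : (∑ k, conj (x k) * conj (b k)) = conj (∑ k, x k * b k) := by
      rw [map_sum]
      exact Finset.sum_congr rfl fun k _ => ((starRingEnd ℂ).map_mul _ _).symm
    rw [h, hxb', map_zero]
  have key : (∑ i, ∑ k, skewMap x b i k * conj (skewMap x b i k))
      = ((vecNormSq b : ℝ) : ℂ) * ((vecNormSq x : ℝ) : ℂ)
        + ((vecNormSq x : ℝ) : ℂ) * ((vecNormSq b : ℝ) : ℂ) := by
    simp only [expand, Finset.sum_sub_distrib, Finset.sum_add_distrib,
      ← Finset.sum_mul, ← Finset.mul_sum]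
    rw [sum_mul_conj_self, sum_conj_mul_self]
    have e1 : (∑ i, b i * x i) = 0 := by
      rw [show (∑ i, b i * x i) = ∑ i, x i * b i from
        Finset.sum_congr rfl fun i _ => mul_comm _ _]
      exact hxb'
    have e2 : (∑ i, conj (b i) * conj (x i)) = 0 := by
      rw [show (∑ i, conj (b i) * conj (x i)) = ∑ i, conj (x i) * conj (b i) from
        Finset.sum_congr rfl fun i _ => mul_comm _ _]
      exact hxb''
    rw [e1, e2]
    ring
  rw [key, ← Complex.ofReal_mul, ← Complex.ofReal_mul, ← Complex.ofReal_add, Complex.ofReal_re]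
  ring

lemma skewMap_cross_zero (x b : ι → ℂ) (M : Matrix ι ι ℂ)
    (hM : Mᵀ = -M) (hMx : M *ᵥ x = 0) :
    (∑ i, ∑ k, skewMap x b i k * conj (M i k)) = 0 := by
  have hrow : ∀ i, (∑ k, conj (x k) * conj (M i k)) = 0 := by
    intro i
    have h0 : (∑ k, M i k * x k) = 0 := congrFun hMx i
    have h : (∑ k, conj (x k) * conj (M i k)) = conj (∑ k, M i k * x k) := by
      rw [map_sum]
      exact Finset.sum_congr rfl fun k _ => by
        rw [(starRingEnd ℂ).map_mul]; ring
    rw [h, h0, map_zero]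
  have hcol : ∀ k, (∑ i, conj (x i) * conj (M i k)) = 0 := by
    intro k
    have h0 : (∑ i, M i k * x i) = 0 := by
      have h1 : (Mᵀ *ᵥ x) k = 0 := by rw [hM, Matrix.neg_mulVec, hMx]; simp
      have h2 : (Mᵀ *ᵥ x) k = ∑ i, M i k * x i := by
        rw [mulVec_eq_sum]
        exact Finset.sum_congr rfl fun i _ => rfl
      rw [← h2, h1]
    have h : (∑ i, conj (x i) * conj (M i k)) = conj (∑ i, M i k * x i) := by
      rw [map_sum]
      exact Finset.sum_congr rfl fun i _ => by
        rw [(starRingEnd ℂ).map_mul]; ring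
    rw [h, h0, map_zero]
  have expand : ∀ i k : ι, skewMap x b i k * conj (M i k)
      = b i * (conj (x k) * conj (M i k)) - b k * (conj (x i) * conj (M i k)) := by
    intro i k
    simp only [skewMap, Matrix.of_apply]
    ring
  simp only [expand, Finset.sum_sub_distrib, ← Finset.mul_sum]
  rw [Finset.sum_congr rfl fun i (_ : i ∈ Finset.univ) => by rw [hrow i, mul_zero]]
  have h2 : (∑ i, ∑ k, b k * (conj (x i) * conj (M i k))) = 0 := by
    rw [Finset.sum_comm]
    refine Finset.sum_eq_zero fun k _ => ?_
    rw [← Finset.mul_sum, hcol k, mul_zero]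
  rw [h2]
  simp

lemma bessel_two {E : Type*} [NormedAddCommGroup E] [InnerProductSpace ℂ E]
    (p q u : E) (hpq : inner ℂ p q = 0) (hp : p ≠ 0) (hq : q ≠ 0) :
    ‖inner ℂ p u‖ ^ 2 / ‖p‖ ^ 2 + ‖inner ℂ q u‖ ^ 2 / ‖q‖ ^ 2 ≤ ‖u‖ ^ 2 := by
  have hp0 : ‖p‖ ≠ 0 := norm_ne_zero_iff.mpr hp
  have hq0 : ‖q‖ ≠ 0 := norm_ne_zero_iff.mpr hq
  set v : Fin 2 → E := ![((‖p‖ : ℂ))⁻¹ • p, ((‖q‖ : ℂ))⁻¹ • q] with hv_def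
  have hv : Orthonormal ℂ v := by
    rw [orthonormal_iff_ite]
    intro i j
    have hqp : inner ℂ q p = 0 := by rw [← inner_conj_symm, hpq, map_zero]
    fin_cases i <;> fin_cases j <;>
      simp only [v, Matrix.cons_val_zero, Matrix.cons_val_one, Matrix.head_cons,
        inner_smul_left, inner_smul_right, hpq, hqp, mul_zero, zero_mul,
        inner_self_eq_norm_sq_to_K, map_inv₀, Complex.conj_ofReal,
        Fin.mk_zero, Fin.mk_one, if_true, if_false] <;>
      norm_num <;>
      rw [norm_smul] <;>
      simp [norm_inv, hp0, hq0] <;>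
      field_simp
  have hb := hv.sum_inner_products_le (s := Finset.univ) u
  rw [Fin.sum_univ_two] at hb
  have e0 : ‖inner ℂ (v 0) u‖ ^ 2 = ‖inner ℂ p u‖ ^ 2 / ‖p‖ ^ 2 := by
    simp only [v, Matrix.cons_val_zero, inner_smul_left, map_inv₀, Complex.conj_ofReal,
      norm_mul, norm_inv, Complex.norm_real, Real.norm_eq_abs, abs_norm]
    field_simp
  have e1 : ‖inner ℂ (v 1) u‖ ^ 2 = ‖inner ℂ q u‖ ^ 2 / ‖q‖ ^ 2 := by
    simp only [v, Matrix.cons_val_one, Matrix.head_cons, Matrix.cons_val_zero, inner_smul_left, map_inv₀,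
      Complex.conj_ofReal, norm_mul, norm_inv, Complex.norm_real, Real.norm_eq_abs, abs_norm]
    field_simp
  rw [e0, e1] at hb
  exact hb

lemma star_dot_conj (x b : ι → ℂ) : star x ⬝ᵥ star b = conj (x ⬝ᵥ b) := by
  simp only [dotProduct, Pi.star_apply, Complex.star_def]
  rw [map_sum]
  exact Finset.sum_congr rfl fun k _ => ((starRingEnd ℂ).map_mul _ _).symm

lemma vecNorm_skewMap_mulVec_le (x b u : ι → ℂ) (hxb : x ⬝ᵥ b = 0) :
    vecNorm (skewMap x b *ᵥ u) ≤ (vecNorm x * vecNorm b) * vecNorm u := by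
  by_cases hb : b = 0
  · have : skewMap x b = 0 := by ext i k; simp [skewMap, hb]
    rw [this, Matrix.zero_mulVec]
    have : vecNorm (0 : ι → ℂ) = 0 := by simp [vecNorm, vecNormSq]
    rw [this]
    exact mul_nonneg (mul_nonneg (vecNorm_nonneg x) (vecNorm_nonneg b)) (vecNorm_nonneg u)
  by_cases hx : x = 0
  · have : skewMap x b = 0 := by ext i k; simp [skewMap, hx]
    rw [this, Matrix.zero_mulVec]
    have : vecNorm (0 : ι → ℂ) = 0 := by simp [vecNorm, vecNormSq]
    rw [this]
    exact mul_nonneg (mul_nonneg (vecNorm_nonneg x) (vecNorm_nonneg b)) (vecNorm_nonneg u)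
  have hX := vecNormSq_pos x hx
  have hB := vecNormSq_pos b hb
  set p := toE x with hp_def
  set q := toE (star b) with hq_def
  have hp : p ≠ 0 := by
    intro h
    apply hx
    have := congrArg toE.symm h
    rwa [hp_def, LinearEquiv.symm_apply_apply, map_zero] at this
  have hq : q ≠ 0 := by
    intro h
    apply hb
    have h2 : star b = (0 : ι → ℂ) := by
      have := congrArg toE.symm h
      rwa [hq_def, LinearEquiv.symm_apply_apply, map_zero] at this
    have h3 := congrArg star h2
    simpa using h3
  have hpq : inner ℂ p q = 0 := by
    rw [hp_def, hq_def, inner_toE, star_dot_conj, hxb, map_zero]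
  have hpn : ‖p‖ ^ 2 = vecNormSq x := by rw [hp_def, norm_toE, vecNorm_sq]
  have hqn : ‖q‖ ^ 2 = vecNormSq b := by rw [hq_def, norm_toE, vecNorm_sq, vecNormSq_star]
  set α : ℂ := inner ℂ p (toE u) with hα
  set β : ℂ := inner ℂ q (toE u) with hβ
  have hα' : α = star x ⬝ᵥ u := by rw [hα, hp_def, inner_toE]
  have hβ' : β = b ⬝ᵥ u := by
    rw [hβ, hq_def, inner_toE]
    simp
  have hSu : toE (skewMap x b *ᵥ u) = α • toE b - β • toE (star x) := by
    rw [skewMap_mulVec_eq, _root_.map_sub, _root_.map_smul, _root_.map_smul, hα', hβ']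
  have hcross : inner ℂ (toE b) (toE (star x)) = 0 := by
    rw [inner_toE]
    have : star b ⬝ᵥ star x = conj (b ⬝ᵥ x) := star_dot_conj b x
    rw [this, dotProduct_comm, hxb, map_zero]
  have hnormsq : vecNorm (skewMap x b *ᵥ u) ^ 2
      = ‖α‖ ^ 2 * vecNormSq b + ‖β‖ ^ 2 * vecNormSq x := by
    rw [← norm_toE, hSu, @norm_sub_sq ℂ]
    rw [inner_smul_left, inner_smul_right, hcross]
    simp only [mul_zero, map_zero, Complex.zero_re, sub_zero]
    rw [norm_smul, norm_smul, mul_pow, mul_pow, norm_toE, norm_toE, vecNorm_sq, vecNorm_sq,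
      vecNormSq_star]
    try ring
  have hbessel := bessel_two p q (toE u) hpq hp hq
  rw [hpn, hqn, norm_toE, vecNorm_sq] at hbessel
  rw [← hα, ← hβ] at hbessel
  have hsq : vecNorm (skewMap x b *ᵥ u) ^ 2
      ≤ ((vecNorm x * vecNorm b) * vecNorm u) ^ 2 := by
    rw [hnormsq]
    have expand : ((vecNorm x * vecNorm b) * vecNorm u) ^ 2
        = vecNormSq x * vecNormSq b * vecNorm u ^ 2 := by
      rw [mul_pow, mul_pow, vecNorm_sq, vecNorm_sq]
    rw [expand, vecNorm_sq]
    have h1 : ‖α‖ ^ 2 * vecNormSq b + ‖β‖ ^ 2 * vecNormSq x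
        = vecNormSq x * vecNormSq b * (‖α‖ ^ 2 / vecNormSq x + ‖β‖ ^ 2 / vecNormSq b) := by
      field_simp
      try ring
    rw [h1]
    have h2 : 0 ≤ vecNormSq x * vecNormSq b := by positivity
    exact mul_le_mul_of_nonneg_left hbessel h2
  have h3 : 0 ≤ (vecNorm x * vecNorm b) * vecNorm u := by
    have := vecNorm_nonneg x; have := vecNorm_nonneg b; have := vecNorm_nonneg u
    positivity
  nlinarith [vecNorm_nonneg (skewMap x b *ᵥ u)]

lemma norm_star_dot_le (x u : ι → ℂ) : ‖star x ⬝ᵥ u‖ ≤ vecNorm x * vecNorm u := by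
  rw [← inner_toE, ← norm_toE, ← norm_toE]
  exact norm_inner_le_norm _ _

lemma vecNorm_rankOne_mulVec_le (b x u : ι → ℂ) :
    vecNorm (rankOne b x *ᵥ u) ≤ (vecNorm x * vecNorm b) * vecNorm u := by
  rw [rankOne_mulVec_eq, vecNorm_smul]
  calc ‖star x ⬝ᵥ u‖ * vecNorm b ≤ (vecNorm x * vecNorm u) * vecNorm b :=
        mul_le_mul_of_nonneg_right (norm_star_dot_le x u) (vecNorm_nonneg b)
    _ = (vecNorm x * vecNorm b) * vecNorm u := by ring

lemma toCLM_toE (M : Matrix ι ι ℂ) (u : ι → ℂ) :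
    Matrix.toEuclideanCLM (𝕜 := ℂ) M (toE u) = toE (M *ᵥ u) :=
  Matrix.toEuclideanCLM_toLp M u

lemma vecNorm_mulVec_le_spec (M : Matrix ι ι ℂ) (u : ι → ℂ) :
    vecNorm (M *ᵥ u) ≤ specNorm M * vecNorm u := by
  rw [← norm_toE, ← norm_toE, ← toCLM_toE]
  exact (Matrix.toEuclideanCLM (𝕜 := ℂ) M).le_opNorm _

lemma specNorm_nonneg (M : Matrix ι ι ℂ) : 0 ≤ specNorm M := norm_nonneg _

lemma specNorm_le_of_bound (M : Matrix ι ι ℂ) {c : ℝ} (hc : 0 ≤ c)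
    (h : ∀ u : ι → ℂ, vecNorm (M *ᵥ u) ≤ c * vecNorm u) : specNorm M ≤ c := by
  apply ContinuousLinearMap.opNorm_le_bound _ hc
  intro y
  have hy : toE ((WithLp.equiv 2 (ι → ℂ)) y) = y := rfl
  have hthis := h ((WithLp.equiv 2 (ι → ℂ)) y)
  rw [← norm_toE, ← toCLM_toE, hy] at hthis
  have hy2 : vecNorm ((WithLp.equiv 2 (ι → ℂ)) y) = ‖y‖ := by rw [← norm_toE, hy]
  rw [hy2] at hthis
  exact hthis

lemma lamNormSq_pos (m : ℕ) (z : ℂ) : 0 < lamNormSq m z := by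
  rw [lamNormSq]
  have h0 : (0 : Fin (m+1)) ∈ Finset.univ := Finset.mem_univ _
  have : (1 : ℝ) ≤ ∑ j : Fin (m+1), ‖z ^ ((j : Fin (m+1)) : ℕ)‖ ^ 2 := by
    have := Finset.single_le_sum (f := fun j : Fin (m+1) => ‖z ^ (j:ℕ)‖ ^ 2)
      (fun j _ => by positivity) h0
    simpa using this
  linarith

lemma vecNorm_neg (u : ι → ℂ) : vecNorm (-u) = vecNorm u := by
  simp [vecNorm, vecNormSq]

lemma polyNormF_nonneg {m : ℕ} (Δ : Fin (m+1) → Matrix ι ι ℂ) : 0 ≤ polyNormF Δ :=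
  Real.sqrt_nonneg _

lemma polyNorm2_nonneg {m : ℕ} (Δ : Fin (m+1) → Matrix ι ι ℂ) : 0 ≤ polyNorm2 Δ :=
  Real.sqrt_nonneg _

lemma sum_pow_mul_conj_pow (m : ℕ) (z : ℂ) :
    (∑ j : Fin (m+1), z ^ (j:ℕ) * conj (z ^ (j:ℕ))) = ((lamNormSq m z : ℝ) : ℂ) := by
  have h : ∀ j : Fin (m+1), z ^ (j:ℕ) * conj (z ^ (j:ℕ)) = ((‖z ^ (j:ℕ)‖ ^ 2 : ℝ) : ℂ) :=
    fun j => mul_conj_norm _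
  rw [Finset.sum_congr rfl fun j _ => h j, lamNormSq]
  push_cast
  ring

def wcoef (m : ℕ) (z : ℂ) (X : ℝ) : Fin (m+1) → ℂ :=
  fun j => -(conj (z ^ (j:ℕ)) / ((lamNormSq m z * X : ℝ) : ℂ))

lemma sum_pow_mul_wcoef (m : ℕ) (z : ℂ) (X : ℝ) (hX : X ≠ 0) :
    (∑ j : Fin (m+1), z ^ (j:ℕ) * wcoef m z X j) = -(1 / (X : ℂ)) := by
  have hL := lamNormSq_pos m z
  have hD : ((lamNormSq m z * X : ℝ) : ℂ) ≠ 0 := by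
    simp only [ne_eq, Complex.ofReal_eq_zero]
    intro h
    rcases mul_eq_zero.mp h with h | h
    · exact absurd h (ne_of_gt hL)
    · exact hX h
  have h : (∑ j : Fin (m+1), z ^ (j:ℕ) * wcoef m z X j)
      = -((∑ j : Fin (m+1), z ^ (j:ℕ) * conj (z ^ (j:ℕ))) / ((lamNormSq m z * X : ℝ) : ℂ)) := by
    rw [Finset.sum_div, ← Finset.sum_neg_distrib]
    refine Finset.sum_congr rfl fun j _ => ?_
    rw [wcoef]
    field_simp
  rw [h, sum_pow_mul_conj_pow]
  have hLX : ((lamNormSq m z : ℝ) : ℂ) ≠ 0 := by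
    simp only [ne_eq, Complex.ofReal_eq_zero]
    exact ne_of_gt hL
  have hXc : (X : ℂ) ≠ 0 := by
    simp only [ne_eq, Complex.ofReal_eq_zero]
    exact hX
  push_cast
  field_simp

lemma sum_normSq_wcoef (m : ℕ) (z : ℂ) (X : ℝ) (hX : 0 < X) :
    (∑ j : Fin (m+1), ‖wcoef m z X j‖ ^ 2) = 1 / (lamNormSq m z * X ^ 2) := by
  have hL := lamNormSq_pos m z
  have h : ∀ j : Fin (m+1), ‖wcoef m z X j‖ ^ 2
      = ‖z ^ (j:ℕ)‖ ^ 2 / (lamNormSq m z * X) ^ 2 := by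
    intro j
    rw [wcoef, norm_neg, norm_div, div_pow]
    congr 1
    · rw [RCLike.norm_conj]
    · rw [Complex.norm_real, Real.norm_eq_abs, abs_of_pos (by positivity)]
  rw [Finset.sum_congr rfl fun j _ => h j, ← Finset.sum_div, ← lamNormSq]
  field_simp

lemma polyEval_smul_tuple {m : ℕ} (c : Fin (m+1) → ℂ) (S : Matrix ι ι ℂ) (z : ℂ) :
    polyEval (fun j => c j • S) z = (∑ j : Fin (m+1), z ^ (j:ℕ) * c j) • S := by
  rw [polyEval, Finset.sum_smul]
  exact Finset.sum_congr rfl fun j _ => smul_smul _ _ _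

lemma polyEval_sub_tuple {m : ℕ} (F G : Fin (m+1) → Matrix ι ι ℂ) (z : ℂ) :
    polyEval (fun j => F j - G j) z = polyEval F z - polyEval G z := by
  simp only [polyEval, smul_sub, Finset.sum_sub_distrib]

lemma feas_resid {m : ℕ} (A Δ : Fin (m+1) → Matrix ι ι ℂ) (lam : ℂ) (x : ι → ℂ)
    (hfeas : (polyEval A lam + polyEval Δ lam) *ᵥ x = 0) :
    polyEval Δ lam *ᵥ x = -(polyEval A lam *ᵥ x) := by
  rw [Matrix.add_mulVec] at hfeas
  linear_combination (norm := module) hfeas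

lemma lb_generic {m : ℕ} (A Δ : Fin (m+1) → Matrix ι ι ℂ) (lam : ℂ) (x : ι → ℂ)
    (hfeas : (polyEval A lam + polyEval Δ lam) *ᵥ x = 0)
    (c : Fin (m+1) → ℝ) (hc0 : ∀ j, 0 ≤ c j)
    (hc : ∀ j u, vecNorm (Δ j *ᵥ u) ≤ c j * vecNorm u) :
    vecNorm (polyEval A lam *ᵥ x)
      ≤ Real.sqrt (lamNormSq m lam) * Real.sqrt (∑ j, c j ^ 2) * vecNorm x := by
  have h1 : vecNorm (polyEval A lam *ᵥ x) = vecNorm (polyEval Δ lam *ᵥ x) := by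
    rw [feas_resid A Δ lam x hfeas, vecNorm_neg]
  rw [h1, polyEval_mulVec]
  have h2 : vecNorm (∑ j : Fin (m+1), lam ^ (j:ℕ) • (Δ j *ᵥ x))
      ≤ ∑ j : Fin (m+1), ‖lam ^ (j:ℕ)‖ * vecNorm (Δ j *ᵥ x) := by
    rw [← norm_toE, map_sum]
    refine (norm_sum_le _ _).trans ?_
    refine Finset.sum_le_sum fun j _ => ?_
    rw [_root_.map_smul, norm_smul, norm_toE]
  refine h2.trans ?_
  have h3 : (∑ j : Fin (m+1), ‖lam ^ (j:ℕ)‖ * vecNorm (Δ j *ᵥ x))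
      ≤ ∑ j : Fin (m+1), ‖lam ^ (j:ℕ)‖ * (c j * vecNorm x) := by
    refine Finset.sum_le_sum fun j _ => ?_
    exact mul_le_mul_of_nonneg_left (hc j x) (norm_nonneg _)
  refine h3.trans ?_
  have h4 : (∑ j : Fin (m+1), ‖lam ^ (j:ℕ)‖ * (c j * vecNorm x))
      = (∑ j : Fin (m+1), ‖lam ^ (j:ℕ)‖ * c j) * vecNorm x := by
    rw [Finset.sum_mul]
    exact Finset.sum_congr rfl fun j _ => by ring
  rw [h4]
  refine mul_le_mul_of_nonneg_right ?_ (vecNorm_nonneg x)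
  have h5 := Real.sum_mul_le_sqrt_mul_sqrt Finset.univ
    (fun j : Fin (m+1) => ‖lam ^ (j:ℕ)‖) (fun j => c j)
  have h6 : lamNormSq m lam = ∑ j : Fin (m+1), ‖lam ^ (j:ℕ)‖ ^ 2 := rfl
  rw [h6]
  exact h5

lemma normsq_add (p q : ℂ) : ‖p + q‖ ^ 2 = ‖p‖ ^ 2 + ‖q‖ ^ 2 + 2 * (p * conj q).re := by
  have h1 : ‖p + q‖ ^ 2 = ((p + q) * conj (p + q)).re := by rw [mul_conj_norm, Complex.ofReal_re]
  have h2 : ‖p‖ ^ 2 = (p * conj p).re := by rw [mul_conj_norm, Complex.ofReal_re]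
  have h3 : ‖q‖ ^ 2 = (q * conj q).re := by rw [mul_conj_norm, Complex.ofReal_re]
  have h4 : (q * conj p).re = (p * conj q).re := by
    rw [show q * conj p = conj (p * conj q) by rw [_root_.map_mul, Complex.conj_conj]; ring]
    exact Complex.conj_re _
  rw [h1, h2, h3, map_add]
  have h5 : (p + q) * (conj p + conj q) = p * conj p + q * conj q + (p * conj q + q * conj p) := by
    ring
  rw [h5, Complex.add_re, Complex.add_re, Complex.add_re, h4]
  ring

lemma frob_decomp (P Q : Matrix ι ι ℂ) :
    frobNormSq (P + Q) = frobNormSq P + frobNormSq Q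
      + 2 * (∑ i, ∑ k, P i k * conj (Q i k)).re := by
  simp only [frobNormSq, Matrix.add_apply, normsq_add, Finset.sum_add_distrib, Complex.re_sum,
    Finset.mul_sum]

lemma polyEval_apply {m : ℕ} (F : Fin (m+1) → Matrix ι ι ℂ) (z : ℂ) (i k : ι) :
    polyEval F z i k = ∑ j : Fin (m+1), z ^ (j:ℕ) * F j i k := by
  simp [polyEval, Matrix.sum_apply]

lemma witness_resid {m : ℕ} (lam : ℂ) (x b : ι → ℂ) (S : Matrix ι ι ℂ) (hx0 : x ≠ 0)
    (hSx : S *ᵥ x = ((vecNormSq x : ℝ) : ℂ) • b) :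
    polyEval (fun j => wcoef m lam (vecNormSq x) j • S) lam *ᵥ x = -b := by
  have hXpos := vecNormSq_pos x hx0
  have hXc : ((vecNormSq x : ℝ) : ℂ) ≠ 0 := by
    simp only [ne_eq, Complex.ofReal_eq_zero]
    exact ne_of_gt hXpos
  rw [polyEval_smul_tuple, sum_pow_mul_wcoef m lam _ (ne_of_gt hXpos),
    Matrix.smul_mulVec, hSx, smul_smul]
  rw [show -(1 / ((vecNormSq x : ℝ) : ℂ)) * ((vecNormSq x : ℝ) : ℂ) = -1 by field_simp]
  module

lemma sum_frob_wit {m : ℕ} (lam : ℂ) (X : ℝ) (hX : 0 < X) (S : Matrix ι ι ℂ) :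
    (∑ j : Fin (m+1), frobNormSq (wcoef m lam X j • S))
      = frobNormSq S / (lamNormSq m lam * X ^ 2) := by
  have h : ∀ j : Fin (m+1), frobNormSq (wcoef m lam X j • S)
      = ‖wcoef m lam X j‖ ^ 2 * frobNormSq S := fun j => frobNormSq_smul _ _
  rw [Finset.sum_congr rfl fun j _ => h j, ← Finset.sum_mul, sum_normSq_wcoef m lam X hX]
  ring

lemma lb_skewF {m : ℕ} (A Δ : Fin (m+1) → Matrix ι ι ℂ) (lam : ℂ) (x : ι → ℂ)
    (hx0 : x ≠ 0) (hxr : x ⬝ᵥ (polyEval A lam *ᵥ x) = 0)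
    (hskew : ∀ j, (Δ j)ᵀ = -(Δ j))
    (hfeas : (polyEval A lam + polyEval Δ lam) *ᵥ x = 0) :
    2 * vecNormSq (polyEval A lam *ᵥ x) / (lamNormSq m lam * vecNormSq x)
      ≤ ∑ j, frobNormSq (Δ j) := by
  have hXpos := vecNormSq_pos x hx0
  have hLpos := lamNormSq_pos m lam
  set r : ι → ℂ := polyEval A lam *ᵥ x with hr
  set X : ℝ := vecNormSq x with hXdef
  set L : ℝ := lamNormSq m lam with hLdef
  set S : Matrix ι ι ℂ := skewMap x r with hSdef
  set Δw : Fin (m+1) → Matrix ι ι ℂ := fun j => wcoef m lam X j • S with hΔw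
  set K : Fin (m+1) → Matrix ι ι ℂ := fun j => Δ j - Δw j with hKdef
  have hKskew : ∀ j, (K j)ᵀ = -(K j) := by
    intro j
    show (Δ j - Δw j)ᵀ = -(Δ j - Δw j)
    rw [Matrix.transpose_sub, hskew j]
    have : (Δw j)ᵀ = -(Δw j) := by
      show (wcoef m lam X j • S)ᵀ = -(wcoef m lam X j • S)
      rw [Matrix.transpose_smul, hSdef, skewMap_transpose, smul_neg]
    rw [this]
    module
  set M : Matrix ι ι ℂ := polyEval K lam with hMdef
  have hMskew : Mᵀ = -M := transpose_polyEval K hKskew lam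
  have hΔwx : polyEval Δw lam *ᵥ x = -r :=
    witness_resid lam x r S hx0 (skewMap_mulVec_self x r hxr)
  have hMx : M *ᵥ x = 0 := by
    rw [hMdef, show K = fun j => Δ j - Δw j from rfl, polyEval_sub_tuple, Matrix.sub_mulVec,
      hΔwx, feas_resid A Δ lam x hfeas]
    simp [hr]
  have hcross : (∑ j : Fin (m+1), ∑ i, ∑ k, Δw j i k * conj (K j i k)) = 0 := by
    have hD : ∀ j : Fin (m+1), conj (wcoef m lam X j)
        = -(lam ^ (j:ℕ) / ((L * X : ℝ) : ℂ)) := by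
      intro j
      rw [wcoef, map_neg, map_div₀, Complex.conj_conj, Complex.conj_ofReal]
    have step1 : (∑ j : Fin (m+1), ∑ i, ∑ k, Δw j i k * conj (K j i k))
        = ∑ i, ∑ k, S i k * conj (∑ j : Fin (m+1), conj (wcoef m lam X j) * K j i k) := by
      rw [Finset.sum_comm]
      refine Finset.sum_congr rfl fun i _ => ?_
      rw [Finset.sum_comm]
      refine Finset.sum_congr rfl fun k _ => ?_
      rw [map_sum, Finset.mul_sum]
      refine Finset.sum_congr rfl fun j _ => ?_
      rw [(starRingEnd ℂ).map_mul, Complex.conj_conj]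
      show wcoef m lam X j * S i k * conj (K j i k) = S i k * (wcoef m lam X j * conj (K j i k))
      ring
    rw [step1]
    have step2 : ∀ i k : ι, (∑ j : Fin (m+1), conj (wcoef m lam X j) * K j i k)
        = -(1 / ((L * X : ℝ) : ℂ)) * M i k := by
      intro i k
      rw [hMdef, polyEval_apply, Finset.mul_sum]
      refine Finset.sum_congr rfl fun j _ => ?_
      rw [hD j]
      ring
    rw [Finset.sum_congr rfl fun i _ => Finset.sum_congr rfl fun k _ => by rw [step2 i k]]
    have step3 : (∑ i, ∑ k, S i k * conj (-(1 / ((L * X : ℝ) : ℂ)) * M i k))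
        = conj (-(1 / ((L * X : ℝ) : ℂ))) * ∑ i, ∑ k, S i k * conj (M i k) := by
      rw [Finset.mul_sum]
      refine Finset.sum_congr rfl fun i _ => ?_
      rw [Finset.mul_sum]
      refine Finset.sum_congr rfl fun k _ => ?_
      rw [(starRingEnd ℂ).map_mul]
      ring
    rw [step3, hSdef, skewMap_cross_zero x r M hMskew hMx, mul_zero]
  have hdecomp : (∑ j, frobNormSq (Δ j))
      = (∑ j, frobNormSq (Δw j)) + (∑ j, frobNormSq (K j))
        + 2 * (∑ j : Fin (m+1), ∑ i, ∑ k, Δw j i k * conj (K j i k)).re := by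
    rw [Complex.re_sum, Finset.mul_sum, ← Finset.sum_add_distrib, ← Finset.sum_add_distrib]
    refine Finset.sum_congr rfl fun j _ => ?_
    have : Δ j = Δw j + K j := by rw [hKdef]; simp
    rw [this, frob_decomp]
  rw [hdecomp, hcross]
  have hwit : (∑ j, frobNormSq (Δw j)) = 2 * vecNormSq r / (L * X) := by
    have h1 : (∑ j : Fin (m+1), frobNormSq (Δw j))
        = frobNormSq S / (L * X ^ 2) := sum_frob_wit lam X hXpos S
    rw [h1, hSdef, frobNormSq_skewMap x r hxr]
    rw [hXdef]
    field_simp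
  rw [hwit]
  have hK0 : 0 ≤ ∑ j, frobNormSq (K j) :=
    Finset.sum_nonneg fun j _ => frobNormSq_nonneg _
  simp only [Complex.zero_re, mul_zero, add_zero]
  linarith

lemma vecNorm_mulVec_le_frob (M : Matrix ι ι ℂ) (u : ι → ℂ) :
    vecNorm (M *ᵥ u) ≤ Real.sqrt (frobNormSq M) * vecNorm u := by
  have hsq : vecNormSq (M *ᵥ u) ≤ frobNormSq M * vecNormSq u := by
    rw [vecNormSq, frobNormSq, Finset.sum_mul]
    refine Finset.sum_le_sum fun i _ => ?_
    have h1 : ‖(M *ᵥ u) i‖ ≤ ∑ k, ‖M i k‖ * ‖u k‖ := by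
      rw [mulVec_eq_sum]
      refine (norm_sum_le _ _).trans ?_
      exact le_of_eq (Finset.sum_congr rfl fun k _ => norm_mul _ _)
    have h2 : (∑ k, ‖M i k‖ * ‖u k‖)
        ≤ Real.sqrt (∑ k, ‖M i k‖ ^ 2) * Real.sqrt (∑ k, ‖u k‖ ^ 2) :=
      Real.sum_mul_le_sqrt_mul_sqrt _ _ _
    have h3 : ‖(M *ᵥ u) i‖ ≤ Real.sqrt (∑ k, ‖M i k‖ ^ 2) * Real.sqrt (∑ k, ‖u k‖ ^ 2) :=
      h1.trans h2
    have h4 : 0 ≤ ‖(M *ᵥ u) i‖ := norm_nonneg _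
    calc ‖(M *ᵥ u) i‖ ^ 2
        ≤ (Real.sqrt (∑ k, ‖M i k‖ ^ 2) * Real.sqrt (∑ k, ‖u k‖ ^ 2)) ^ 2 := by
          exact pow_le_pow_left₀ h4 h3 2
      _ = (∑ k, ‖M i k‖ ^ 2) * vecNormSq u := by
          rw [mul_pow, Real.sq_sqrt (Finset.sum_nonneg fun k _ => by positivity),
            Real.sq_sqrt (Finset.sum_nonneg fun k _ => by positivity)]
          rfl
  calc vecNorm (M *ᵥ u) = Real.sqrt (vecNormSq (M *ᵥ u)) := rfl
    _ ≤ Real.sqrt (frobNormSq M * vecNormSq u) := Real.sqrt_le_sqrt hsq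
    _ = Real.sqrt (frobNormSq M) * vecNorm u := by
        rw [Real.sqrt_mul (frobNormSq_nonneg M)]
        rfl

lemma eta_le_of_mem {m : ℕ} (N : (Fin (m+1) → Matrix ι ι ℂ) → ℝ) (hN : ∀ Δ, 0 ≤ N Δ)
    (S : Set (Fin (m+1) → Matrix ι ι ℂ)) (lam : ℂ) (x : ι → ℂ)
    (A Δ : Fin (m+1) → Matrix ι ι ℂ) (hmem : Δ ∈ S)
    (hfeas : (polyEval A lam + polyEval Δ lam) *ᵥ x = 0) {v : ℝ} (hv : N Δ ≤ v) :
    eta N S lam x A ≤ v := by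
  refine le_trans (csInf_le ?_ ⟨Δ, hmem, hfeas, rfl⟩) hv
  exact ⟨0, fun t ht => by obtain ⟨Δ', _, _, rfl⟩ := ht; exact hN Δ'⟩

lemma le_eta {m : ℕ} (N : (Fin (m+1) → Matrix ι ι ℂ) → ℝ)
    (S : Set (Fin (m+1) → Matrix ι ι ℂ)) (lam : ℂ) (x : ι → ℂ)
    (A Δ₀ : Fin (m+1) → Matrix ι ι ℂ) (hmem : Δ₀ ∈ S)
    (hfeas : (polyEval A lam + polyEval Δ₀ lam) *ᵥ x = 0) {v : ℝ}
    (hlb : ∀ Δ ∈ S, (polyEval A lam + polyEval Δ lam) *ᵥ x = 0 → v ≤ N Δ) :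
    v ≤ eta N S lam x A := by
  refine le_csInf ⟨N Δ₀, Δ₀, hmem, hfeas, rfl⟩ ?_
  rintro t ⟨Δ, hm, hf, rfl⟩
  exact hlb Δ hm hf

section EtaVals

variable {m : ℕ} (A : Fin (m+1) → Matrix ι ι ℂ) (lam : ℂ) (x : ι → ℂ)

lemma lb_generic' (hx0 : x ≠ 0) (Δ : Fin (m+1) → Matrix ι ι ℂ)
    (hfeas : (polyEval A lam + polyEval Δ lam) *ᵥ x = 0)
    (c : Fin (m+1) → ℝ) (hc0 : ∀ j, 0 ≤ c j)
    (hc : ∀ j u, vecNorm (Δ j *ᵥ u) ≤ c j * vecNorm u) :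
    Real.sqrt (vecNormSq (polyEval A lam *ᵥ x) / (lamNormSq m lam * vecNormSq x))
      ≤ Real.sqrt (∑ j, c j ^ 2) := by
  have h := lb_generic A Δ lam x hfeas c hc0 hc
  have hLpos := lamNormSq_pos m lam
  have hXpos := vecNormSq_pos x hx0
  have hBnn := vecNormSq_nonneg (polyEval A lam *ᵥ x)
  have hQnn : (0:ℝ) ≤ ∑ j, c j ^ 2 := Finset.sum_nonneg fun j _ => by positivity
  have h2 : vecNormSq (polyEval A lam *ᵥ x)
      ≤ lamNormSq m lam * (∑ j, c j ^ 2) * vecNormSq x := by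
    have hr : vecNorm (polyEval A lam *ᵥ x)
        = Real.sqrt (vecNormSq (polyEval A lam *ᵥ x)) := rfl
    have hx' : vecNorm x = Real.sqrt (vecNormSq x) := rfl
    rw [hr, hx'] at h
    have h3 : Real.sqrt (vecNormSq (polyEval A lam *ᵥ x))
        ≤ Real.sqrt (lamNormSq m lam * (∑ j, c j ^ 2) * vecNormSq x) := by
      refine h.trans_eq ?_
      rw [Real.sqrt_mul (mul_nonneg hLpos.le hQnn), Real.sqrt_mul hLpos.le]
    exact (Real.sqrt_le_sqrt_iff (by positivity)).mp h3
  rw [Real.sqrt_le_sqrt_iff hQnn, div_le_iff₀ (by positivity)]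
  linarith [h2]

lemma polyNorm2_wit_le (c : Fin (m+1) → ℂ) (S : Matrix ι ι ℂ) (b : ℝ) (hb : 0 ≤ b)
    (hS : ∀ u, vecNorm (S *ᵥ u) ≤ b * vecNorm u) :
    polyNorm2 (fun j => c j • S) ≤ Real.sqrt ((∑ j, ‖c j‖ ^ 2) * b ^ 2) := by
  rw [polyNorm2]
  apply Real.sqrt_le_sqrt
  rw [Finset.sum_mul]
  refine Finset.sum_le_sum fun j _ => ?_
  have h1 : specNorm (c j • S) ≤ ‖c j‖ * b := by
    apply specNorm_le_of_bound _ (mul_nonneg (norm_nonneg _) hb)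
    intro u
    rw [Matrix.smul_mulVec, vecNorm_smul]
    calc ‖c j‖ * vecNorm (S *ᵥ u) ≤ ‖c j‖ * (b * vecNorm u) :=
          mul_le_mul_of_nonneg_left (hS u) (norm_nonneg _)
      _ = ‖c j‖ * b * vecNorm u := by ring
  calc specNorm (c j • S) ^ 2 ≤ (‖c j‖ * b) ^ 2 := pow_le_pow_left₀ (specNorm_nonneg _) h1 2
    _ = ‖c j‖ ^ 2 * b ^ 2 := by ring

lemma eta_F_univ_val (hx0 : x ≠ 0) :
    eta polyNormF Set.univ lam x A
      = Real.sqrt (vecNormSq (polyEval A lam *ᵥ x) / (lamNormSq m lam * vecNormSq x)) := by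
  have hXpos := vecNormSq_pos x hx0
  have hLpos := lamNormSq_pos m lam
  set r := polyEval A lam *ᵥ x with hr
  set Δw := fun j : Fin (m+1) => wcoef m lam (vecNormSq x) j • rankOne r x with hΔw
  have hresid : polyEval Δw lam *ᵥ x = -r :=
    witness_resid lam x r _ hx0 (rankOne_mulVec_self r x)
  have hfeas : (polyEval A lam + polyEval Δw lam) *ᵥ x = 0 := by
    rw [Matrix.add_mulVec, hresid]; exact add_neg_cancel _
  have hvalue : polyNormF Δw
      = Real.sqrt (vecNormSq r / (lamNormSq m lam * vecNormSq x)) := by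
    rw [polyNormF]
    congr 1
    rw [hΔw, sum_frob_wit lam (vecNormSq x) hXpos, frobNormSq_rankOne]
    field_simp
  apply le_antisymm
  · exact eta_le_of_mem _ polyNormF_nonneg _ _ _ A Δw (Set.mem_univ _) hfeas hvalue.le
  · refine le_eta _ _ _ _ A Δw (Set.mem_univ _) hfeas ?_
    intro Δ _ hf
    have h := lb_generic' A lam x hx0 Δ hf (fun j => Real.sqrt (frobNormSq (Δ j)))
      (fun j => Real.sqrt_nonneg _) (fun j u => vecNorm_mulVec_le_frob _ _)
    refine h.trans_eq ?_
    rw [polyNormF]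
    congr 1
    exact Finset.sum_congr rfl fun j _ => Real.sq_sqrt (frobNormSq_nonneg _)

lemma eta_2_univ_val (hx0 : x ≠ 0) :
    eta polyNorm2 Set.univ lam x A
      = Real.sqrt (vecNormSq (polyEval A lam *ᵥ x) / (lamNormSq m lam * vecNormSq x)) := by
  have hXpos := vecNormSq_pos x hx0
  have hLpos := lamNormSq_pos m lam
  set r := polyEval A lam *ᵥ x with hr
  set Δw := fun j : Fin (m+1) => wcoef m lam (vecNormSq x) j • rankOne r x with hΔw
  have hresid : polyEval Δw lam *ᵥ x = -r :=
    witness_resid lam x r _ hx0 (rankOne_mulVec_self r x)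
  have hfeas : (polyEval A lam + polyEval Δw lam) *ᵥ x = 0 := by
    rw [Matrix.add_mulVec, hresid]; exact add_neg_cancel _
  have hvalue : polyNorm2 Δw
      ≤ Real.sqrt (vecNormSq r / (lamNormSq m lam * vecNormSq x)) := by
    have h := polyNorm2_wit_le (wcoef m lam (vecNormSq x)) (rankOne r x)
      (vecNorm x * vecNorm r)
      (mul_nonneg (vecNorm_nonneg x) (vecNorm_nonneg r))
      (fun u => vecNorm_rankOne_mulVec_le r x u)
    refine h.trans_eq ?_
    congr 1
    rw [sum_normSq_wcoef m lam _ hXpos, mul_pow, vecNorm_sq, vecNorm_sq]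
    field_simp
  apply le_antisymm
  · exact eta_le_of_mem _ polyNorm2_nonneg _ _ _ A Δw (Set.mem_univ _) hfeas hvalue
  · refine le_eta _ _ _ _ A Δw (Set.mem_univ _) hfeas ?_
    intro Δ _ hf
    have h := lb_generic' A lam x hx0 Δ hf (fun j => specNorm (Δ j))
      (fun j => specNorm_nonneg _) (fun j u => vecNorm_mulVec_le_spec _ _)
    exact h.trans_eq rfl

lemma eta_F_skew_val (hx0 : x ≠ 0) (hxr : x ⬝ᵥ (polyEval A lam *ᵥ x) = 0) :
    eta polyNormF SkewSymPoly lam x A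
      = Real.sqrt (2 * vecNormSq (polyEval A lam *ᵥ x) / (lamNormSq m lam * vecNormSq x)) := by
  have hXpos := vecNormSq_pos x hx0
  have hLpos := lamNormSq_pos m lam
  set r := polyEval A lam *ᵥ x with hr
  set Δw := fun j : Fin (m+1) => wcoef m lam (vecNormSq x) j • skewMap x r with hΔw
  have hmem : Δw ∈ SkewSymPoly := by
    intro j
    show (wcoef m lam (vecNormSq x) j • skewMap x r)ᵀ = -(wcoef m lam (vecNormSq x) j • skewMap x r)
    rw [Matrix.transpose_smul, skewMap_transpose, smul_neg]
  have hresid : polyEval Δw lam *ᵥ x = -r :=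
    witness_resid lam x r _ hx0 (skewMap_mulVec_self x r hxr)
  have hfeas : (polyEval A lam + polyEval Δw lam) *ᵥ x = 0 := by
    rw [Matrix.add_mulVec, hresid]; exact add_neg_cancel _
  have hvalue : polyNormF Δw
      = Real.sqrt (2 * vecNormSq r / (lamNormSq m lam * vecNormSq x)) := by
    rw [polyNormF]
    congr 1
    rw [hΔw, sum_frob_wit lam (vecNormSq x) hXpos, frobNormSq_skewMap x r hxr]
    field_simp
  apply le_antisymm
  · exact eta_le_of_mem _ polyNormF_nonneg _ _ _ A Δw hmem hfeas hvalue.le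
  · refine le_eta _ _ _ _ A Δw hmem hfeas ?_
    intro Δ hm hf
    have h := lb_skewF A Δ lam x hx0 hxr hm hf
    have h2 : Real.sqrt (2 * vecNormSq r / (lamNormSq m lam * vecNormSq x))
        ≤ Real.sqrt (∑ j, frobNormSq (Δ j)) := Real.sqrt_le_sqrt h
    exact h2.trans_eq rfl

lemma eta_2_skew_val (hx0 : x ≠ 0) (hxr : x ⬝ᵥ (polyEval A lam *ᵥ x) = 0) :
    eta polyNorm2 SkewSymPoly lam x A
      = Real.sqrt (vecNormSq (polyEval A lam *ᵥ x) / (lamNormSq m lam * vecNormSq x)) := by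
  have hXpos := vecNormSq_pos x hx0
  have hLpos := lamNormSq_pos m lam
  set r := polyEval A lam *ᵥ x with hr
  set Δw := fun j : Fin (m+1) => wcoef m lam (vecNormSq x) j • skewMap x r with hΔw
  have hmem : Δw ∈ SkewSymPoly := by
    intro j
    show (wcoef m lam (vecNormSq x) j • skewMap x r)ᵀ = -(wcoef m lam (vecNormSq x) j • skewMap x r)
    rw [Matrix.transpose_smul, skewMap_transpose, smul_neg]
  have hresid : polyEval Δw lam *ᵥ x = -r :=
    witness_resid lam x r _ hx0 (skewMap_mulVec_self x r hxr)
  have hfeas : (polyEval A lam + polyEval Δw lam) *ᵥ x = 0 := by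
    rw [Matrix.add_mulVec, hresid]; exact add_neg_cancel _
  have hvalue : polyNorm2 Δw
      ≤ Real.sqrt (vecNormSq r / (lamNormSq m lam * vecNormSq x)) := by
    have h := polyNorm2_wit_le (wcoef m lam (vecNormSq x)) (skewMap x r)
      (vecNorm x * vecNorm r)
      (mul_nonneg (vecNorm_nonneg x) (vecNorm_nonneg r))
      (fun u => vecNorm_skewMap_mulVec_le x r u hxr)
    refine h.trans_eq ?_
    congr 1
    rw [sum_normSq_wcoef m lam _ hXpos, mul_pow, vecNorm_sq, vecNorm_sq]
    field_simp
  apply le_antisymm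
  · exact eta_le_of_mem _ polyNorm2_nonneg _ _ _ A Δw hmem hfeas hvalue
  · refine le_eta _ _ _ _ A Δw hmem hfeas ?_
    intro Δ _ hf
    have h := lb_generic' A lam x hx0 Δ hf (fun j => specNorm (Δ j))
      (fun j => specNorm_nonneg _) (fun j u => vecNorm_mulVec_le_spec _ _)
    exact h.trans_eq rfl

end EtaVals

lemma vecNormSq_kron {m' n : ℕ} (v : Fin m' → ℂ) (y : Fin n → ℂ) :
    vecNormSq (kronVec v y) = vecNormSq v * vecNormSq y := by
  simp only [vecNormSq, kronVec, Fintype.sum_prod_type, norm_mul, mul_pow]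
  rw [Finset.sum_mul_sum]

lemma vecNormSq_lamVec (m : ℕ) (z : ℂ) :
    vecNormSq (lamVec m z) = ∑ j ∈ Finset.range m, (‖z‖ ^ 2) ^ j := by
  rw [vecNormSq]
  have h : ∀ i : Fin m, ‖lamVec m z i‖ ^ 2 = (‖z‖ ^ 2) ^ (m - 1 - (i : ℕ)) := by
    intro i
    rw [lamVec]
    rw [norm_pow, ← pow_mul, ← pow_mul]
    ring_nf
  rw [Finset.sum_congr rfl fun i _ => h i,
    Fin.sum_univ_eq_sum_range (fun j => (‖z‖ ^ 2) ^ (m - 1 - j)) m]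
  exact Finset.sum_range_reflect (fun j => (‖z‖ ^ 2) ^ j) m

lemma lamNormSq_eq_range (m : ℕ) (z : ℂ) :
    lamNormSq m z = ∑ j ∈ Finset.range (m+1), (‖z‖ ^ 2) ^ j := by
  rw [lamNormSq, Fin.sum_univ_eq_sum_range (fun j => ‖z ^ j‖ ^ 2) (m+1)]
  refine Finset.sum_congr rfl fun j _ => ?_
  rw [norm_pow, ← pow_mul, ← pow_mul]
  ring_nf

lemma one_le_geom (m : ℕ) (hm : 1 ≤ m) (t : ℝ) (ht : 0 ≤ t) :
    1 ≤ ∑ j ∈ Finset.range m, t ^ j := by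
  have h0 : (0 : ℕ) ∈ Finset.range m := Finset.mem_range.mpr (by omega)
  have := Finset.single_le_sum (f := fun j => t ^ j) (fun j _ => by positivity) h0
  simpa using this

lemma geom_ineq1 (m : ℕ) (hm : 1 ≤ m) (t : ℝ) (ht : 0 ≤ t) :
    (∑ j ∈ Finset.range (m+1), t ^ j) ≤ (∑ j ∈ Finset.range m, t ^ j) * (1 + t) := by
  have h1 : (∑ j ∈ Finset.range m, t ^ j) * t = ∑ j ∈ Finset.range m, t ^ (j + 1) := by
    rw [Finset.sum_mul]
    exact Finset.sum_congr rfl fun j _ => by rw [pow_succ]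
  have h2 : (∑ j ∈ Finset.range (m+1), t ^ j)
      = (∑ j ∈ Finset.range m, t ^ (j + 1)) + 1 := by
    rw [Finset.sum_range_succ' (fun j => t ^ j) m]
    norm_num
  have h3 := one_le_geom m hm t ht
  nlinarith [h1, h2, h3]

lemma geom_ineq2 (m : ℕ) (hm : 1 ≤ m) (t : ℝ) (ht : 0 ≤ t) :
    ((m : ℝ) + 1) * ((∑ j ∈ Finset.range m, t ^ j) * (1 + t))
      ≤ 2 * m * (∑ j ∈ Finset.range (m+1), t ^ j) := by
  set P := ∑ j ∈ Finset.range (m+1), t ^ j with hP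
  have hW : (∑ j ∈ Finset.range m, t ^ j) = P - t ^ m := by
    rw [hP, Finset.sum_range_succ]
    ring
  have h1 : (∑ j ∈ Finset.range m, t ^ j) * t = ∑ j ∈ Finset.range m, t ^ (j + 1) := by
    rw [Finset.sum_mul]
    exact Finset.sum_congr rfl fun j _ => by rw [pow_succ]
  have h2 : (∑ j ∈ Finset.range m, t ^ (j + 1)) = P - 1 := by
    rw [hP, Finset.sum_range_succ' (fun j => t ^ j) m]
    norm_num
  have hrefl : (∑ j ∈ Finset.range (m+1), t ^ (m - j)) = P := by
    rw [hP]
    have := Finset.sum_range_reflect (fun j => t ^ j) (m+1)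
    simpa using this
  have hpt : ∀ j ∈ Finset.range (m+1), t ^ j + t ^ (m - j) ≤ 1 + t ^ m := by
    intro j hj
    have hjm : j ≤ m := by
      have := Finset.mem_range.mp hj
      omega
    have hprod : t ^ j * t ^ (m - j) = t ^ m := by
      rw [← pow_add]
      congr 1
      omega
    rcases le_or_gt t 1 with h | h
    · have hj1 : t ^ j ≤ 1 := pow_le_one₀ ht h
      have hj2 : t ^ (m - j) ≤ 1 := pow_le_one₀ ht h
      nlinarith [hprod, hj1, hj2]
    · have hj1 : 1 ≤ t ^ j := one_le_pow₀ h.le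
      have hj2 : 1 ≤ t ^ (m - j) := one_le_pow₀ h.le
      nlinarith [hprod, hj1, hj2]
  have hsum : 2 * P ≤ ((m : ℝ) + 1) * (1 + t ^ m) := by
    have h4 : (∑ j ∈ Finset.range (m+1), (t ^ j + t ^ (m - j)))
        ≤ ∑ j ∈ Finset.range (m+1), (1 + t ^ m) := Finset.sum_le_sum hpt
    rw [Finset.sum_add_distrib, hrefl] at h4
    rw [Finset.sum_const, Finset.card_range, nsmul_eq_mul] at h4
    push_cast at h4
    linarith [h4]
  have hm' : (1 : ℝ) ≤ (m : ℝ) := by exact_mod_cast hm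
  nlinarith [hW, h1, h2, hsum, hm']

end SkewAux

/-- Structured backward errors under skew-symmetric linearization of a
skew-symmetric matrix polynomial, for both the Frobenius and the spectral norm, together
with the equality of the structured and unstructured ratios whenever defined. -/
theorem skewsymmetric_linearization_backward_error {n m : ℕ} (hm : 1 ≤ m)
    (A : Fin (m+1) → Matrix (Fin n) (Fin n) ℂ)
    (hA : A ∈ SkewSymPoly) (hreg : Regular A) (hlead : A (Fin.last m) ≠ 0)
    (B : Fin (1+1) → Matrix (Fin m × Fin n) (Fin m × Fin n) ℂ)
    (hB : B ∈ SkewSymPoly)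
    (v : Fin m → ℂ) (hv : vecNormSq v = 1) (hL : InL1 A B v)
    (lam : ℂ) (x : Fin n → ℂ) (hx : star x ⬝ᵥ x = 1) :
    (Real.sqrt (((m : ℝ) + 1) / (2 * m)) * eta polyNormF SkewSymPoly lam x A
        ≤ eta polyNormF SkewSymPoly lam (kronVec (lamVec m lam) x) B ∧
      eta polyNormF SkewSymPoly lam (kronVec (lamVec m lam) x) B
        ≤ eta polyNormF SkewSymPoly lam x A) ∧
    (Real.sqrt (((m : ℝ) + 1) / (2 * m)) * eta polyNorm2 SkewSymPoly lam x A
        ≤ eta polyNorm2 SkewSymPoly lam (kronVec (lamVec m lam) x) B ∧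
      eta polyNorm2 SkewSymPoly lam (kronVec (lamVec m lam) x) B
        ≤ eta polyNorm2 SkewSymPoly lam x A) ∧
    (eta polyNormF Set.univ lam x A ≠ 0 → eta polyNormF SkewSymPoly lam x A ≠ 0 →
      eta polyNormF SkewSymPoly lam (kronVec (lamVec m lam) x) B
          / eta polyNormF SkewSymPoly lam x A
        = eta polyNormF Set.univ lam (kronVec (lamVec m lam) x) B
          / eta polyNormF Set.univ lam x A) ∧
    (eta polyNorm2 Set.univ lam x A ≠ 0 → eta polyNorm2 SkewSymPoly lam x A ≠ 0 →
      eta polyNorm2 SkewSymPoly lam (kronVec (lamVec m lam) x) B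
          / eta polyNorm2 SkewSymPoly lam x A
        = eta polyNorm2 Set.univ lam (kronVec (lamVec m lam) x) B
          / eta polyNorm2 Set.univ lam x A) := by
  have hx1 : vecNormSq x = 1 := by
    have h := SkewAux.star_dot_self x
    rw [h] at hx
    exact_mod_cast hx
  have hx0 : x ≠ 0 := by
    intro h
    rw [h] at hx1
    simp [vecNormSq] at hx1
  have hxr : x ⬝ᵥ (polyEval A lam *ᵥ x) = 0 :=
    SkewAux.dot_mulVec_self_eq_zero _ (SkewAux.transpose_polyEval A hA lam) x
  set t : ℝ := ‖lam‖ ^ 2 with ht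
  have ht0 : (0:ℝ) ≤ t := by positivity
  set w : Fin m × Fin n → ℂ := kronVec (lamVec m lam) x with hw
  have hWval : vecNormSq w = ∑ j ∈ Finset.range m, t ^ j := by
    rw [hw, SkewAux.vecNormSq_kron, SkewAux.vecNormSq_lamVec, hx1, mul_one]
  have hW1 : (1:ℝ) ≤ vecNormSq w := by
    rw [hWval]
    exact SkewAux.one_le_geom m hm t ht0
  have hWpos : (0:ℝ) < vecNormSq w := by linarith
  have hw0 : w ≠ 0 := by
    intro h
    rw [h] at hW1
    simp [vecNormSq] at hW1
    linarith
  have hwr : w ⬝ᵥ (polyEval B lam *ᵥ w) = 0 :=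
    SkewAux.dot_mulVec_self_eq_zero _ (SkewAux.transpose_polyEval B hB lam) w
  have hrL : vecNormSq (polyEval B lam *ᵥ w) = vecNormSq (polyEval A lam *ᵥ x) := by
    rw [hw, hL lam x, SkewAux.vecNormSq_kron, hv, one_mul]
  have hP : lamNormSq m lam = ∑ j ∈ Finset.range (m+1), t ^ j :=
    SkewAux.lamNormSq_eq_range m lam
  have hL1 : lamNormSq 1 lam = 1 + t := by
    rw [SkewAux.lamNormSq_eq_range 1 lam, Finset.sum_range_succ, Finset.sum_range_one,
      pow_zero, pow_one, ← ht]
  have hPpos : (0:ℝ) < lamNormSq m lam := SkewAux.lamNormSq_pos m lam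
  have hL1pos : (0:ℝ) < lamNormSq 1 lam := SkewAux.lamNormSq_pos 1 lam
  have hup : lamNormSq m lam ≤ lamNormSq 1 lam * vecNormSq w := by
    rw [hP, hL1, hWval, mul_comm]
    exact SkewAux.geom_ineq1 m hm t ht0
  have hlow : ((m : ℝ) + 1) * (lamNormSq 1 lam * vecNormSq w) ≤ 2 * m * lamNormSq m lam := by
    rw [hP, hL1, hWval, mul_comm (1 + t)]
    exact SkewAux.geom_ineq2 m hm t ht0
  have hm' : (1:ℝ) ≤ (m : ℝ) := by exact_mod_cast hm
  rw [SkewAux.eta_F_skew_val A lam x hx0 hxr, SkewAux.eta_2_skew_val A lam x hx0 hxr,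
      SkewAux.eta_F_univ_val A lam x hx0, SkewAux.eta_2_univ_val A lam x hx0,
      SkewAux.eta_F_skew_val B lam w hw0 hwr, SkewAux.eta_2_skew_val B lam w hw0 hwr,
      SkewAux.eta_F_univ_val B lam w hw0, SkewAux.eta_2_univ_val B lam w hw0,
      hrL, hx1, mul_one]
  set Bq : ℝ := vecNormSq (polyEval A lam *ᵥ x) with hBq
  have hBq0 : (0:ℝ) ≤ Bq := SkewAux.vecNormSq_nonneg _
  set P : ℝ := lamNormSq m lam with hPd
  set C : ℝ := lamNormSq 1 lam * vecNormSq w with hCd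
  have hCpos : (0:ℝ) < C := by
    rw [hCd]
    exact mul_pos hL1pos hWpos
  have hfrac0 : (0:ℝ) ≤ ((m : ℝ) + 1) / (2 * m) := by positivity
  have key_low : ∀ a : ℝ, 0 ≤ a →
      Real.sqrt (((m : ℝ) + 1) / (2 * m)) * Real.sqrt (a / P) ≤ Real.sqrt (a / C) := by
    intro a ha
    rw [← Real.sqrt_mul hfrac0]
    apply Real.sqrt_le_sqrt
    rw [div_mul_div_comm]
    rw [div_le_div_iff₀ (by positivity) hCpos]
    nlinarith [hlow, ha, hCpos, hPpos]
  have key_up : ∀ a : ℝ, 0 ≤ a → Real.sqrt (a / C) ≤ Real.sqrt (a / P) := by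
    intro a ha
    apply Real.sqrt_le_sqrt
    rw [div_le_div_iff₀ hCpos hPpos]
    nlinarith [hup, ha, hPpos]
  refine ⟨⟨key_low (2 * Bq) (by linarith), key_up (2 * Bq) (by linarith)⟩,
    ⟨key_low Bq hBq0, key_up Bq hBq0⟩, ?_, ?_⟩
  · intro _ _
    rw [show 2 * Bq / C = 2 * (Bq / C) by ring, show 2 * Bq / P = 2 * (Bq / P) by ring,
      Real.sqrt_mul (by norm_num : (0:ℝ) ≤ 2), Real.sqrt_mul (by norm_num : (0:ℝ) ≤ 2)]
    rw [mul_div_mul_left _ _ (by positivity : Real.sqrt 2 ≠ 0)]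
  · intro _ _
    rfl
end
end
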